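/- arXiv:math/0401267 — 10 statements merged into one kernel-verified Lean document; each statement's English description precedes it below -/
import Mathlib

section
/- Let U ⊆ ℂ be open and let ξ, μ : ℂ → ℂ be holomorphic on U such that w(z) := conj(ξ(z)) − μ(z) ≠ 0 for every z ∈ U. Then the function z ↦ log |w(z)| is smooth on U and its Laplacian satisfies Δ(log |w|)(z) = Re( 4 · μ′(z) · conj(ξ′(z)) / w(z)² ) for every z ∈ U. -/
/-- Partial derivative in the direction of `1` (the `x`-direction) of `u : ℂ → ℝ`. -/
noncomputable def pdx (u : ℂ → ℝ) (z : ℂ) : ℝ := fderiv ℝ u z 1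

/-- Partial derivative in the direction of `I` (the `y`-direction) of `u : ℂ → ℝ`. -/
noncomputable def pdy (u : ℂ → ℝ) (z : ℂ) : ℝ := fderiv ℝ u z Complex.I

/-- The flat Laplacian `Δu = ∂²u/∂x² + ∂²u/∂y²` of `u : ℂ → ℝ`. -/
noncomputable def lap (u : ℂ → ℝ) (z : ℂ) : ℝ := pdx (pdx u) z + pdy (pdy u) z

/-- The real-linear map `h ↦ a*h + b*conj h`. -/
noncomputable def CM (a b : ℂ) : ℂ →L[ℝ] ℂ :=
  a • (ContinuousLinearMap.id ℂ ℂ).restrictScalars ℝ +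
    b • ((Complex.conjCLE : ℂ ≃L[ℝ] ℂ) : ℂ →L[ℝ] ℂ)

@[simp] lemma CM_apply (a b h : ℂ) : CM a b h = a * h + b * (starRingEnd ℂ) h := by
  simp [CM, Complex.conjCLE_apply, smul_eq_mul]

/-- The real-linear functional `h ↦ (a*h + b*conj h).re`. -/
noncomputable def RM (a b : ℂ) : ℂ →L[ℝ] ℝ := Complex.reCLM.comp (CM a b)

@[simp] lemma RM_apply (a b h : ℂ) : RM a b h = (a * h + b * (starRingEnd ℂ) h).re := by
  simp [RM]

lemma HasDerivAt.cm {f : ℂ → ℂ} {f' z : ℂ} (hf : HasDerivAt f f' z) :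
    HasFDerivAt f (CM f' 0) z := by
  have h := (hf.hasFDerivAt).restrictScalars ℝ
  refine h.congr_fderiv ?_
  ext h'
  simp [mul_comm]

lemma HasFDerivAt.cmConj {f : ℂ → ℂ} {a b : ℂ} {z : ℂ}
    (hf : HasFDerivAt f (CM a b) z) :
    HasFDerivAt (fun z => (starRingEnd ℂ) (f z))
      (CM ((starRingEnd ℂ) b) ((starRingEnd ℂ) a)) z := by
  have h := ((Complex.conjCLE : ℂ ≃L[ℝ] ℂ).hasFDerivAt (x := f z)).comp z hf
  refine h.congr_fderiv ?_
  ext h'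
  simp [Complex.conjCLE_apply, map_add, map_mul]
  ring

lemma HasFDerivAt.cmSub {f g : ℂ → ℂ} {a b c d : ℂ} {z : ℂ}
    (hf : HasFDerivAt f (CM a b) z) (hg : HasFDerivAt g (CM c d) z) :
    HasFDerivAt (fun z => f z - g z) (CM (a - c) (b - d)) z := by
  refine (hf.sub hg).congr_fderiv ?_
  ext h'
  simp
  ring

lemma HasFDerivAt.cmAdd {f g : ℂ → ℂ} {a b c d : ℂ} {z : ℂ}
    (hf : HasFDerivAt f (CM a b) z) (hg : HasFDerivAt g (CM c d) z) :
    HasFDerivAt (fun z => f z + g z) (CM (a + c) (b + d)) z := by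
  refine (hf.add hg).congr_fderiv ?_
  ext h'
  simp
  ring

lemma HasFDerivAt.cmNeg {f : ℂ → ℂ} {a b : ℂ} {z : ℂ}
    (hf : HasFDerivAt f (CM a b) z) :
    HasFDerivAt (fun z => -(f z)) (CM (-a) (-b)) z := by
  refine (hf.neg).congr_fderiv ?_
  ext h'
  simp
  ring

lemma HasFDerivAt.cmConstMul {f : ℂ → ℂ} {a b : ℂ} {z : ℂ} (k : ℂ)
    (hf : HasFDerivAt f (CM a b) z) :
    HasFDerivAt (fun z => k * f z) (CM (k * a) (k * b)) z := by
  refine (hf.const_mul k).congr_fderiv ?_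
  ext h'
  simp
  ring

lemma HasFDerivAt.cmMul {f g : ℂ → ℂ} {a b c d : ℂ} {z : ℂ}
    (hf : HasFDerivAt f (CM a b) z) (hg : HasFDerivAt g (CM c d) z) :
    HasFDerivAt (fun z => f z * g z)
      (CM (f z * c + g z * a) (f z * d + g z * b)) z := by
  refine (hf.mul hg).congr_fderiv ?_
  ext h'
  simp [smul_eq_mul]
  ring

lemma HasFDerivAt.cmRe {f : ℂ → ℂ} {a b : ℂ} {z : ℂ}
    (hf : HasFDerivAt f (CM a b) z) :
    HasFDerivAt (fun z => (f z).re) (RM a b) z :=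
  (Complex.reCLM.hasFDerivAt (x := f z)).comp z hf

lemma hasFDerivAt_rdiv {f g : ℂ → ℝ} {Lf Lg : ℂ →L[ℝ] ℝ} {z : ℂ}
    (hf : HasFDerivAt f Lf z) (hg : HasFDerivAt g Lg z) (h0 : g z ≠ 0) :
    HasFDerivAt (fun z => f z / g z)
      ((g z)⁻¹ • Lf - (f z / g z ^ 2) • Lg) z := by
  have hinv := (hasFDerivAt_inv h0).comp z hg
  have h := hf.mul hinv
  have h2 : HasFDerivAt (fun z => f z / g z)
      (f z • ((ContinuousLinearMap.smulRight (1 : ℝ →L[ℝ] ℝ) (-(g z ^ 2)⁻¹)).comp Lg)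
        + (g z)⁻¹ • Lf) z := by
    exact h
  refine h2.congr_fderiv ?_
  ext h'
  simp
  ring

lemma pdx_eq_of_hasFDerivAt {u : ℂ → ℝ} {L : ℂ →L[ℝ] ℝ} {z : ℂ}
    (h : HasFDerivAt u L z) : pdx u z = L 1 := by rw [pdx, h.fderiv]

lemma pdy_eq_of_hasFDerivAt {u : ℂ → ℝ} {L : ℂ →L[ℝ] ℝ} {z : ℂ}
    (h : HasFDerivAt u L z) : pdy u z = L Complex.I := by rw [pdy, h.fderiv]

/-- the function `w` -/
noncomputable def wfun (ξ μ : ℂ → ℂ) : ℂ → ℂ := fun z => (starRingEnd ℂ) (ξ z) - μ z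
/-- `∂w/∂x` -/
noncomputable def wX (ξ μ : ℂ → ℂ) : ℂ → ℂ :=
  fun z => (starRingEnd ℂ) (deriv ξ z) - deriv μ z
/-- `∂w/∂y` -/
noncomputable def wY (ξ μ : ℂ → ℂ) : ℂ → ℂ :=
  fun z => -(Complex.I * ((starRingEnd ℂ) (deriv ξ z) + deriv μ z))
/-- `|w|²` -/
noncomputable def Nf (ξ μ : ℂ → ℂ) : ℂ → ℝ :=
  fun z => ((starRingEnd ℂ) (wfun ξ μ z) * wfun ξ μ z).re
/-- candidate for `∂(log|w|)/∂x` -/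
noncomputable def G1 (ξ μ : ℂ → ℂ) : ℂ → ℝ :=
  fun z => ((starRingEnd ℂ) (wfun ξ μ z) * wX ξ μ z).re / Nf ξ μ z
/-- candidate for `∂(log|w|)/∂y` -/
noncomputable def G2 (ξ μ : ℂ → ℂ) : ℂ → ℝ :=
  fun z => ((starRingEnd ℂ) (wfun ξ μ z) * wY ξ μ z).re / Nf ξ μ z

lemma Nf_eq (ξ μ : ℂ → ℂ) (z : ℂ) : Nf ξ μ z = Complex.normSq (wfun ξ μ z) := by
  rw [Nf, ← Complex.normSq_eq_conj_mul_self, Complex.ofReal_re]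

section pointwise
variable {ξ μ : ℂ → ℂ} {z a b a2 b2 : ℂ}

lemma hasFDerivAt_wfun (ha : HasDerivAt ξ a z) (hb : HasDerivAt μ b z) :
    HasFDerivAt (wfun ξ μ) (CM (-b) ((starRingEnd ℂ) a)) z := by
  have h := (ha.cm.cmConj).cmSub hb.cm
  refine h.congr_fderiv ?_
  ext h'
  simp

lemma hasFDerivAt_wX (ha2 : HasDerivAt (deriv ξ) a2 z) (hb2 : HasDerivAt (deriv μ) b2 z) :
    HasFDerivAt (wX ξ μ) (CM (-b2) ((starRingEnd ℂ) a2)) z := by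
  have h := (ha2.cm.cmConj).cmSub hb2.cm
  refine h.congr_fderiv ?_
  ext h'
  simp

lemma hasFDerivAt_wY (ha2 : HasDerivAt (deriv ξ) a2 z) (hb2 : HasDerivAt (deriv μ) b2 z) :
    HasFDerivAt (wY ξ μ)
      (CM (-(Complex.I * b2)) (-(Complex.I * (starRingEnd ℂ) a2))) z := by
  have h := (((ha2.cm.cmConj).cmAdd hb2.cm).cmConstMul Complex.I).cmNeg
  refine h.congr_fderiv ?_
  ext h'
  simp

lemma hasFDerivAt_Nf (ha : HasDerivAt ξ a z) (hb : HasDerivAt μ b z) :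
    HasFDerivAt (Nf ξ μ)
      (RM ((starRingEnd ℂ) (wfun ξ μ z) * (-b) + wfun ξ μ z * a)
          ((starRingEnd ℂ) (wfun ξ μ z) * (starRingEnd ℂ) a
            + wfun ξ μ z * (-((starRingEnd ℂ) b)))) z := by
  have hw := hasFDerivAt_wfun ha hb
  have h := (hw.cmConj.cmMul hw).cmRe
  refine h.congr_fderiv ?_
  ext h'
  simp

end pointwise

set_option maxHeartbeats 2000000 in
/-- If `ξ, μ` are holomorphic on an open set `U ⊆ ℂ` and `w = conj ∘ ξ − μ` never vanishes
on `U`, then `log |w|` is smooth on `U` and its Laplacian equals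
`Re (4 μ' conj(ξ') / w²)` on `U`. -/
theorem log_abs_w_smooth_and_laplacian
    (U : Set ℂ) (hU : IsOpen U) (ξ μ : ℂ → ℂ)
    (hξ : DifferentiableOn ℂ ξ U) (hμ : DifferentiableOn ℂ μ U)
    (w : ℂ → ℂ) (hw : ∀ z, w z = (starRingEnd ℂ) (ξ z) - μ z)
    (hw0 : ∀ z ∈ U, w z ≠ 0) :
    ContDiffOn ℝ (⊤ : ℕ∞) (fun z => Real.log ‖w z‖) U ∧
    ∀ z ∈ U,
      lap (fun z => Real.log ‖w z‖) z =
        (4 * deriv μ z * (starRingEnd ℂ) (deriv ξ z) / (w z) ^ 2).re := by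
  have hwf : w = wfun ξ μ := funext hw
  subst hwf
  have hξa : AnalyticOnNhd ℂ ξ U := hξ.analyticOnNhd hU
  have hμa : AnalyticOnNhd ℂ μ U := hμ.analyticOnNhd hU
  have hN0 : ∀ z ∈ U, Nf ξ μ z ≠ 0 := by
    intro z hz
    rw [Nf_eq]
    exact (Complex.normSq_pos.2 (hw0 z hz)).ne'
  -- rewrite log |w| as log (Nf) / 2
  have hufun : (fun z => Real.log ‖wfun ξ μ z‖)
      = fun z => (1/2 : ℝ) * Real.log (Nf ξ μ z) := by
    funext t
    rw [Complex.norm_def, Real.log_sqrt (Complex.normSq_nonneg _), Nf_eq]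
    ring
  rw [hufun]
  -- first derivatives
  have hpdx : ∀ z ∈ U, pdx (fun z => (1/2 : ℝ) * Real.log (Nf ξ μ z)) z = G1 ξ μ z := by
    intro z hz
    have ha : HasDerivAt ξ (deriv ξ z) z :=
      (hξ.differentiableAt (hU.mem_nhds hz)).hasDerivAt
    have hb : HasDerivAt μ (deriv μ z) z :=
      (hμ.differentiableAt (hU.mem_nhds hz)).hasDerivAt
    have HU := ((hasFDerivAt_Nf ha hb).log (hN0 z hz)).const_mul (1/2 : ℝ)
    rw [pdx_eq_of_hasFDerivAt HU]
    have h1 : (wfun ξ μ z).re * (wfun ξ μ z).re + (wfun ξ μ z).im * (wfun ξ μ z).im ≠ 0 := by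
      have := (Complex.normSq_pos.2 (hw0 z hz)).ne'
      simpa [Complex.normSq_apply] using this
    simp only [G1, wX, Nf, ContinuousLinearMap.smul_apply, RM_apply, smul_eq_mul]
    simp [Complex.mul_re, Complex.mul_im, Complex.add_re, Complex.add_im,
      Complex.sub_re, Complex.sub_im]
    field_simp
    ring
  have hpdy : ∀ z ∈ U, pdy (fun z => (1/2 : ℝ) * Real.log (Nf ξ μ z)) z = G2 ξ μ z := by
    intro z hz
    have ha : HasDerivAt ξ (deriv ξ z) z :=
      (hξ.differentiableAt (hU.mem_nhds hz)).hasDerivAt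
    have hb : HasDerivAt μ (deriv μ z) z :=
      (hμ.differentiableAt (hU.mem_nhds hz)).hasDerivAt
    have HU := ((hasFDerivAt_Nf ha hb).log (hN0 z hz)).const_mul (1/2 : ℝ)
    rw [pdy_eq_of_hasFDerivAt HU]
    have h1 : (wfun ξ μ z).re * (wfun ξ μ z).re + (wfun ξ μ z).im * (wfun ξ μ z).im ≠ 0 := by
      have := (Complex.normSq_pos.2 (hw0 z hz)).ne'
      simpa [Complex.normSq_apply] using this
    simp only [G2, wY, Nf, ContinuousLinearMap.smul_apply, RM_apply, smul_eq_mul]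
    simp [Complex.mul_re, Complex.mul_im, Complex.add_re, Complex.add_im,
      Complex.sub_re, Complex.sub_im]
    field_simp
    ring
  constructor
  · have hconj : ContDiff ℝ (⊤ : ℕ∞) (starRingEnd ℂ) :=
      ((Complex.conjCLE : ℂ ≃L[ℝ] ℂ) : ℂ →L[ℝ] ℂ).contDiff
    have hξc : ContDiffOn ℝ (⊤ : ℕ∞) ξ U :=
      (hξa.contDiffOn hU.uniqueDiffOn).restrict_scalars ℝ
    have hμc : ContDiffOn ℝ (⊤ : ℕ∞) μ U :=
      (hμa.contDiffOn hU.uniqueDiffOn).restrict_scalars ℝ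
    have hwc : ContDiffOn ℝ (⊤ : ℕ∞) (wfun ξ μ) U :=
      (hconj.comp_contDiffOn hξc).sub hμc
    have hNc : ContDiffOn ℝ (⊤ : ℕ∞) (Nf ξ μ) U :=
      Complex.reCLM.contDiff.comp_contDiffOn
        ((hconj.comp_contDiffOn hwc).mul hwc)
    intro z hz
    exact (contDiffAt_const.mul
      (((hNc z hz).contDiffAt (hU.mem_nhds hz)).log (hN0 z hz))).contDiffWithinAt
  · intro z hz
    have ha : HasDerivAt ξ (deriv ξ z) z :=
      (hξ.differentiableAt (hU.mem_nhds hz)).hasDerivAt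
    have hb : HasDerivAt μ (deriv μ z) z :=
      (hμ.differentiableAt (hU.mem_nhds hz)).hasDerivAt
    have ha2 : HasDerivAt (deriv ξ) (deriv (deriv ξ) z) z :=
      ((hξa.deriv z hz).differentiableAt).hasDerivAt
    have hb2 : HasDerivAt (deriv μ) (deriv (deriv μ) z) z :=
      ((hμa.deriv z hz).differentiableAt).hasDerivAt
    have hwd := hasFDerivAt_wfun ha hb
    have hNd := hasFDerivAt_Nf ha hb
    -- second derivative in x
    have hx : pdx (pdx (fun z => (1/2 : ℝ) * Real.log (Nf ξ μ z))) z = pdx (G1 ξ μ) z := by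
      have hev : (pdx (fun z => (1/2 : ℝ) * Real.log (Nf ξ μ z))) =ᶠ[nhds z] G1 ξ μ :=
        Filter.eventually_of_mem (hU.mem_nhds hz) hpdx
      rw [pdx, pdx, hev.fderiv_eq]
    have hy : pdy (pdy (fun z => (1/2 : ℝ) * Real.log (Nf ξ μ z))) z = pdy (G2 ξ μ) z := by
      have hev : (pdy (fun z => (1/2 : ℝ) * Real.log (Nf ξ μ z))) =ᶠ[nhds z] G2 ξ μ :=
        Filter.eventually_of_mem (hU.mem_nhds hz) hpdy
      rw [pdy, pdy, hev.fderiv_eq]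
    -- derivative of G1
    have hP1 := (hwd.cmConj.cmMul (hasFDerivAt_wX ha2 hb2)).cmRe
    have hP2 := (hwd.cmConj.cmMul (hasFDerivAt_wY ha2 hb2)).cmRe
    have hG1 : HasFDerivAt (G1 ξ μ) _ z := hasFDerivAt_rdiv hP1 hNd (hN0 z hz)
    have hG2 : HasFDerivAt (G2 ξ μ) _ z := hasFDerivAt_rdiv hP2 hNd (hN0 z hz)
    rw [lap, hx, hy, pdx_eq_of_hasFDerivAt hG1, pdy_eq_of_hasFDerivAt hG2]
    have h1 : (wfun ξ μ z).re * (wfun ξ μ z).re + (wfun ξ μ z).im * (wfun ξ μ z).im ≠ 0 := by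
      have := (Complex.normSq_pos.2 (hw0 z hz)).ne'
      simpa [Complex.normSq_apply] using this
    simp only [ContinuousLinearMap.sub_apply, ContinuousLinearMap.smul_apply, RM_apply,
      smul_eq_mul, G1, G2, wX, wY, Nf]
    simp [Complex.mul_re, Complex.mul_im, Complex.add_re, Complex.add_im,
      Complex.sub_re, Complex.sub_im, Complex.div_re, Complex.normSq_apply, pow_two]
    have h2 : (wfun ξ μ z).im ^ 2 * (wfun ξ μ z).re ^ 2 * 2 + (wfun ξ μ z).im ^ 4
        + (wfun ξ μ z).re ^ 4 ≠ 0 := by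
      have he : (wfun ξ μ z).im ^ 2 * (wfun ξ μ z).re ^ 2 * 2 + (wfun ξ μ z).im ^ 4
          + (wfun ξ μ z).re ^ 4
          = ((wfun ξ μ z).re * (wfun ξ μ z).re + (wfun ξ μ z).im * (wfun ξ μ z).im) ^ 2 := by
        ring
      rw [he]
      exact pow_ne_zero _ h1
    generalize hgx : (wfun ξ μ z).re = x at h1 h2 ⊢
    generalize hgy : (wfun ξ μ z).im = y at h1 h2 ⊢
    generalize hgp : (deriv ξ z).re = p at h1 h2 ⊢
    generalize hgq : (deriv ξ z).im = q at h1 h2 ⊢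
    generalize hgr : (deriv μ z).re = r at h1 h2 ⊢
    generalize hgs : (deriv μ z).im = s at h1 h2 ⊢
    clear * - h1 h2
    have h3 : (x * x - y * y) * (x * x - y * y) + (x * y + y * x) * (x * y + y * x) ≠ 0 := by
      have he : (x * x - y * y) * (x * x - y * y) + (x * y + y * x) * (x * y + y * x)
          = (x * x + y * y) ^ 2 := by ring
      rw [he]
      exact pow_ne_zero _ h1
    field_simp [h2, h3]
    ring
end

section
/- Let U ⊆ ℂ be open and let X = (X₁, X₂, X₃) : ℂ → ℝ³ be a conformal harmonic immersion on U such that X₁(z)² + X₂(z)² > 0 for every z ∈ U. Set r(z) = √(X₁(z)² + X₂(z)²). Then for every z ∈ U one has |Δ(log r)(z)| ≤ ‖∇X₃(z)‖² / r(z)². (This is the paper's Lemma 2.2, the intrinsic inequality |Δ_M log r| ≤ |∇_M x₃|² / r² on a minimal surface avoiding the x₃-axis, expressed in a conformal parametrization.) -/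
set_option maxHeartbeats 1000000

/-- The squared norm of the flat gradient of `u : ℂ → ℝ`. -/
noncomputable def gradSq (u : ℂ → ℝ) (z : ℂ) : ℝ := (pdx u z) ^ 2 + (pdy u z) ^ 2

private lemma pd_congr {f g : ℂ → ℝ} {U : Set ℂ} (hU : IsOpen U) (h : Set.EqOn f g U)
    {z : ℂ} (hz : z ∈ U) (v : ℂ) : fderiv ℝ f z v = fderiv ℝ g z v := by
  rw [Filter.EventuallyEq.fderiv_eq (Filter.eventuallyEq_of_mem (hU.mem_nhds hz) h)]

private lemma pd_add {f g : ℂ → ℝ} {z : ℂ} (hf : DifferentiableAt ℝ f z)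
    (hg : DifferentiableAt ℝ g z) (v : ℂ) :
    fderiv ℝ (fun w => f w + g w) z v = fderiv ℝ f z v + fderiv ℝ g z v := by
  rw [fderiv_fun_add hf hg]; rfl

private lemma pd_mul {f g : ℂ → ℝ} {z : ℂ} (hf : DifferentiableAt ℝ f z)
    (hg : DifferentiableAt ℝ g z) (v : ℂ) :
    fderiv ℝ (fun w => f w * g w) z v = f z * fderiv ℝ g z v + g z * fderiv ℝ f z v := by
  rw [fderiv_fun_mul hf hg]; simp [mul_comm]

private lemma pd_inv {g : ℂ → ℝ} {z : ℂ} (hg : DifferentiableAt ℝ g z) (hg0 : g z ≠ 0) (v : ℂ) :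
    fderiv ℝ (fun w => (g w)⁻¹) z v = -(fderiv ℝ g z v) / g z ^ 2 := by
  have h : HasFDerivAt (fun w => (g w)⁻¹) ((-(g z ^ 2)⁻¹) • fderiv ℝ g z) z :=
    (hasDerivAt_inv hg0).comp_hasFDerivAt z hg.hasFDerivAt
  rw [h.fderiv]
  simp [ContinuousLinearMap.smul_apply]
  ring

private lemma pd_log {f : ℂ → ℝ} {z : ℂ} (hf : DifferentiableAt ℝ f z) (h0 : f z ≠ 0) (v : ℂ) :
    fderiv ℝ (fun w => Real.log (f w)) z v = fderiv ℝ f z v / f z := by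
  have h : HasFDerivAt (fun w => Real.log (f w)) ((f z)⁻¹ • fderiv ℝ f z) z :=
    (Real.hasDerivAt_log h0).comp_hasFDerivAt z hf.hasFDerivAt
  rw [h.fderiv]
  simp [ContinuousLinearMap.smul_apply, div_eq_inv_mul]

private lemma pd_div {f g : ℂ → ℝ} {z : ℂ} (hf : DifferentiableAt ℝ f z)
    (hg : DifferentiableAt ℝ g z) (hg0 : g z ≠ 0) (v : ℂ) :
    fderiv ℝ (fun w => f w / g w) z v
      = (fderiv ℝ f z v * g z - f z * fderiv ℝ g z v) / g z ^ 2 := by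
  have : (fun w => f w / g w) = fun w => f w * (g w)⁻¹ := by
    funext w; rw [div_eq_mul_inv]
  rw [this, pd_mul (g := fun w => (g w)⁻¹) hf (hg.inv hg0) v, pd_inv hg hg0 v]
  field_simp
  ring

private lemma pd_div_const {f : ℂ → ℝ} {z : ℂ} (hf : DifferentiableAt ℝ f z) (c : ℝ) (v : ℂ) :
    fderiv ℝ (fun w => f w / c) z v = fderiv ℝ f z v / c := by
  simp only [div_eq_mul_inv]
  rw [fderiv_mul_const hf c⁻¹]
  simp [mul_comm]

private lemma key_alg (x1 x2 a1 a2 b1 b2 c1 c2 : ℝ)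
    (hC1 : a1 * a2 + b1 * b2 + c1 * c2 = 0)
    (hC2 : a1 ^ 2 + b1 ^ 2 + c1 ^ 2 = a2 ^ 2 + b2 ^ 2 + c2 ^ 2) :
    |(x1 ^ 2 + x2 ^ 2) * (a1 ^ 2 + a2 ^ 2 + b1 ^ 2 + b2 ^ 2)
        - 2 * ((x1 * a1 + x2 * b1) ^ 2 + (x1 * a2 + x2 * b2) ^ 2)|
      ≤ (c1 ^ 2 + c2 ^ 2) * (x1 ^ 2 + x2 ^ 2) := by
  set Q : ℝ := x1 ^ 2 + x2 ^ 2 with hQdef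
  set E : ℝ := Q * (a1 ^ 2 + a2 ^ 2 + b1 ^ 2 + b2 ^ 2)
      - 2 * ((x1 * a1 + x2 * b1) ^ 2 + (x1 * a2 + x2 * b2) ^ 2) with hEdef
  set R : ℝ := (a1 + b2) * (a1 - b2) - (b1 - a2) * (a2 + b1) with hRdef
  set S : ℝ := (a1 + b2) * (a2 + b1) + (b1 - a2) * (a1 - b2) with hSdef
  set I : ℝ := (x1 ^ 2 - x2 ^ 2) * S - 2 * x1 * x2 * R with hIdef
  have h2 : ((a1 + b2) ^ 2 + (b1 - a2) ^ 2) * ((a1 - b2) ^ 2 + (a2 + b1) ^ 2)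
      = (c1 ^ 2 + c2 ^ 2) ^ 2 := by
    linear_combination (a1 ^ 2 + b1 ^ 2 + c1 ^ 2 - a2 ^ 2 - b2 ^ 2 - c2 ^ 2
        - 2 * (c1 ^ 2 - c2 ^ 2)) * hC2
      + (4 * (a1 * a2 + b1 * b2 + c1 * c2) - 8 * c1 * c2) * hC1
  have h1 : E ^ 2 + I ^ 2
      = Q ^ 2 * (((a1 + b2) ^ 2 + (b1 - a2) ^ 2) * ((a1 - b2) ^ 2 + (a2 + b1) ^ 2)) := by
    rw [hEdef, hIdef, hRdef, hSdef, hQdef]; ring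
  have hQ : (0:ℝ) ≤ Q := by rw [hQdef]; positivity
  have hc : (0:ℝ) ≤ c1 ^ 2 + c2 ^ 2 := by positivity
  have hsq : E ^ 2 ≤ ((c1 ^ 2 + c2 ^ 2) * Q) ^ 2 := by nlinarith [sq_nonneg I]
  rw [abs_le]
  constructor <;> nlinarith [sq_nonneg (E + (c1 ^ 2 + c2 ^ 2) * Q),
    sq_nonneg (E - (c1 ^ 2 + c2 ^ 2) * Q), mul_nonneg hc hQ]

/-- Lemma 2.2 of the paper in a conformal parametrization: for a conformal harmonic
immersion `X = (X₁, X₂, X₃)` avoiding the `x₃`-axis, with `r = √(X₁² + X₂²)`, one has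
`|Δ (log r)| ≤ ‖∇X₃‖² / r²` on `U`. -/
theorem abs_laplacian_log_r_le
    (U : Set ℂ) (hU : IsOpen U) (X₁ X₂ X₃ : ℂ → ℝ)
    (hsm₁ : ContDiffOn ℝ (⊤ : ℕ∞) X₁ U) (hsm₂ : ContDiffOn ℝ (⊤ : ℕ∞) X₂ U)
    (hsm₃ : ContDiffOn ℝ (⊤ : ℕ∞) X₃ U)
    (hharm : ∀ z ∈ U, lap X₁ z = 0 ∧ lap X₂ z = 0 ∧ lap X₃ z = 0)
    (lam : ℂ → ℝ)
    (hconf : ∀ z ∈ U,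
      pdx X₁ z * pdy X₁ z + pdx X₂ z * pdy X₂ z + pdx X₃ z * pdy X₃ z = 0)
    (hnormx : ∀ z ∈ U, (pdx X₁ z) ^ 2 + (pdx X₂ z) ^ 2 + (pdx X₃ z) ^ 2 = (lam z) ^ 2)
    (hnormy : ∀ z ∈ U, (pdy X₁ z) ^ 2 + (pdy X₂ z) ^ 2 + (pdy X₃ z) ^ 2 = (lam z) ^ 2)
    (hlam : ∀ z ∈ U, 0 < lam z)
    (hax : ∀ z ∈ U, 0 < (X₁ z) ^ 2 + (X₂ z) ^ 2)
    (r : ℂ → ℝ) (hr : ∀ z, r z = Real.sqrt ((X₁ z) ^ 2 + (X₂ z) ^ 2)) :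
    ∀ z ∈ U, |lap (fun w => Real.log (r w)) z| ≤ gradSq X₃ z / (r z) ^ 2 := by
  intro z hz
  -- differentiability of the coordinates and of their first partials
  have hdiffP : ∀ (X : ℂ → ℝ), ContDiffOn ℝ (⊤:ℕ∞) X U → ∀ (v : ℂ), ∀ w ∈ U,
      DifferentiableAt ℝ (fun u => fderiv ℝ X u v) w := by
    intro X hX v w hw
    have h1 : ContDiffOn ℝ (⊤:ℕ∞) (fun u => fderiv ℝ X u) U :=
      hX.fderiv_of_isOpen hU (by exact_mod_cast le_top)
    have h2 : ContDiffOn ℝ (⊤:ℕ∞) (fun u => fderiv ℝ X u v) U := h1.clm_apply contDiffOn_const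
    exact (h2.differentiableOn (by simp)).differentiableAt (hU.mem_nhds hw)
  have hd₁ : ∀ w ∈ U, DifferentiableAt ℝ X₁ w := fun w hw =>
    ((hsm₁.differentiableOn (by simp)).differentiableAt (hU.mem_nhds hw))
  have hd₂ : ∀ w ∈ U, DifferentiableAt ℝ X₂ w := fun w hw =>
    ((hsm₂.differentiableOn (by simp)).differentiableAt (hU.mem_nhds hw))
  -- the squared distance to the x₃-axis
  set Qf : ℂ → ℝ := fun w => X₁ w ^ 2 + X₂ w ^ 2 with hQfdef
  have hQrw : Qf = fun u => X₁ u * X₁ u + X₂ u * X₂ u := by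
    funext u; simp only [hQfdef]; ring
  have hQpos : ∀ w ∈ U, 0 < Qf w := fun w hw => hax w hw
  have hdQ : ∀ w ∈ U, DifferentiableAt ℝ Qf w := by
    intro w hw
    rw [hQrw]
    exact ((hd₁ w hw).mul (hd₁ w hw)).add ((hd₂ w hw).mul (hd₂ w hw))
  have hQd : ∀ (v : ℂ), ∀ w ∈ U, fderiv ℝ Qf w v
      = 2 * X₁ w * fderiv ℝ X₁ w v + 2 * X₂ w * fderiv ℝ X₂ w v := by
    intro v w hw
    rw [hQrw]
    rw [pd_add (f := fun u => X₁ u * X₁ u) (g := fun u => X₂ u * X₂ u) ((hd₁ w hw).mul (hd₁ w hw)) ((hd₂ w hw).mul (hd₂ w hw)) v,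
        pd_mul (hd₁ w hw) (hd₁ w hw) v, pd_mul (hd₂ w hw) (hd₂ w hw) v]
    ring
  -- log r agrees with (log Qf)/2 on U
  set g : ℂ → ℝ := fun w => Real.log (Qf w) / 2 with hgdef
  have hEqg : Set.EqOn (fun w => Real.log (r w)) g U := by
    intro w hw
    simp only [hgdef, hQfdef]
    rw [hr w, Real.log_sqrt (le_of_lt (hax w hw))]
  -- first partials of g on U
  have hgx : ∀ (v : ℂ), Set.EqOn (fun u => fderiv ℝ g u v)
      (fun u => (X₁ u * fderiv ℝ X₁ u v + X₂ u * fderiv ℝ X₂ u v) / Qf u) U := by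
    intro v w hw
    have h0 : Qf w ≠ 0 := (hQpos w hw).ne'
    simp only [hgdef]
    rw [pd_div_const ((hdQ w hw).log h0) 2 v,
        pd_log (hdQ w hw) h0 v, hQd v w hw]
    field_simp
  -- second partials of g at z
  have hNd : ∀ (v : ℂ), DifferentiableAt ℝ
      (fun u => X₁ u * fderiv ℝ X₁ u v + X₂ u * fderiv ℝ X₂ u v) z := by
    intro v
    exact ((hd₁ z hz).mul (hdiffP X₁ hsm₁ v z hz)).add ((hd₂ z hz).mul (hdiffP X₂ hsm₂ v z hz))
  have hsecond : ∀ (v : ℂ), fderiv ℝ (fun u => fderiv ℝ g u v) z v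
      = ((X₁ z * fderiv ℝ (fun u => fderiv ℝ X₁ u v) z v + fderiv ℝ X₁ z v * fderiv ℝ X₁ z v
          + X₂ z * fderiv ℝ (fun u => fderiv ℝ X₂ u v) z v + fderiv ℝ X₂ z v * fderiv ℝ X₂ z v)
            * Qf z
          - (X₁ z * fderiv ℝ X₁ z v + X₂ z * fderiv ℝ X₂ z v)
            * (2 * X₁ z * fderiv ℝ X₁ z v + 2 * X₂ z * fderiv ℝ X₂ z v)) / Qf z ^ 2 := by
    intro v
    rw [pd_congr hU (hgx v) hz v]
    rw [pd_div (hNd v) (hdQ z hz) (hQpos z hz).ne' v]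
    rw [pd_add (f := fun u => X₁ u * fderiv ℝ X₁ u v) (g := fun u => X₂ u * fderiv ℝ X₂ u v)
          ((hd₁ z hz).mul (hdiffP X₁ hsm₁ v z hz))
          ((hd₂ z hz).mul (hdiffP X₂ hsm₂ v z hz)) v,
        pd_mul (hd₁ z hz) (hdiffP X₁ hsm₁ v z hz) v,
        pd_mul (hd₂ z hz) (hdiffP X₂ hsm₂ v z hz) v, hQd v z hz]
    ring
  -- harmonicity at z in raw form
  have hharm₁ : fderiv ℝ (fun u => fderiv ℝ X₁ u 1) z 1
      + fderiv ℝ (fun u => fderiv ℝ X₁ u Complex.I) z Complex.I = 0 := (hharm z hz).1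
  have hharm₂ : fderiv ℝ (fun u => fderiv ℝ X₂ u 1) z 1
      + fderiv ℝ (fun u => fderiv ℝ X₂ u Complex.I) z Complex.I = 0 := (hharm z hz).2.1
  -- the laplacian of log r at z equals E / Qf z ^ 2
  have hlapval : lap (fun w => Real.log (r w)) z
      = ((X₁ z ^ 2 + X₂ z ^ 2)
            * (fderiv ℝ X₁ z 1 ^ 2 + fderiv ℝ X₁ z Complex.I ^ 2
              + fderiv ℝ X₂ z 1 ^ 2 + fderiv ℝ X₂ z Complex.I ^ 2)
          - 2 * ((X₁ z * fderiv ℝ X₁ z 1 + X₂ z * fderiv ℝ X₂ z 1) ^ 2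
              + (X₁ z * fderiv ℝ X₁ z Complex.I + X₂ z * fderiv ℝ X₂ z Complex.I) ^ 2))
        / (X₁ z ^ 2 + X₂ z ^ 2) ^ 2 := by
    have hx : Set.EqOn (fun u => fderiv ℝ (fun w => Real.log (r w)) u 1)
        (fun u => fderiv ℝ g u 1) U := fun w hw => pd_congr hU hEqg hw 1
    have hy : Set.EqOn (fun u => fderiv ℝ (fun w => Real.log (r w)) u Complex.I)
        (fun u => fderiv ℝ g u Complex.I) U := fun w hw => pd_congr hU hEqg hw Complex.I
    have e1 : lap (fun w => Real.log (r w)) z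
        = fderiv ℝ (fun u => fderiv ℝ g u 1) z 1
          + fderiv ℝ (fun u => fderiv ℝ g u Complex.I) z Complex.I := by
      show fderiv ℝ (fun u => fderiv ℝ (fun w => Real.log (r w)) u 1) z 1
          + fderiv ℝ (fun u => fderiv ℝ (fun w => Real.log (r w)) u Complex.I) z Complex.I = _
      rw [pd_congr hU hx hz 1, pd_congr hU hy hz Complex.I]
    rw [e1, hsecond 1, hsecond Complex.I]
    have hQz : Qf z = X₁ z ^ 2 + X₂ z ^ 2 := by simp only [hQfdef]
    rw [← add_div, hQz]
    congr 1
    linear_combination (X₁ z ^ 2 + X₂ z ^ 2) * X₁ z * hharm₁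
      + (X₁ z ^ 2 + X₂ z ^ 2) * X₂ z * hharm₂
  -- the conformality constraints at z
  have hC1' : fderiv ℝ X₁ z 1 * fderiv ℝ X₁ z Complex.I
      + fderiv ℝ X₂ z 1 * fderiv ℝ X₂ z Complex.I
      + fderiv ℝ X₃ z 1 * fderiv ℝ X₃ z Complex.I = 0 := hconf z hz
  have hC2' : fderiv ℝ X₁ z 1 ^ 2 + fderiv ℝ X₂ z 1 ^ 2 + fderiv ℝ X₃ z 1 ^ 2
      = fderiv ℝ X₁ z Complex.I ^ 2 + fderiv ℝ X₂ z Complex.I ^ 2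
        + fderiv ℝ X₃ z Complex.I ^ 2 := (hnormx z hz).trans (hnormy z hz).symm
  have hkey := key_alg (X₁ z) (X₂ z) (fderiv ℝ X₁ z 1) (fderiv ℝ X₁ z Complex.I)
    (fderiv ℝ X₂ z 1) (fderiv ℝ X₂ z Complex.I)
    (fderiv ℝ X₃ z 1) (fderiv ℝ X₃ z Complex.I) hC1' hC2'
  -- conclude
  have hQ0 : (0:ℝ) < X₁ z ^ 2 + X₂ z ^ 2 := hax z hz
  have hr2 : r z ^ 2 = X₁ z ^ 2 + X₂ z ^ 2 := by
    rw [hr z]; exact Real.sq_sqrt hQ0.le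
  have hgrad : gradSq X₃ z = fderiv ℝ X₃ z 1 ^ 2 + fderiv ℝ X₃ z Complex.I ^ 2 := rfl
  rw [hlapval, hgrad, hr2, abs_div, abs_of_pos (by positivity : (0:ℝ) < (X₁ z ^ 2 + X₂ z ^ 2) ^ 2)]
  rw [div_le_div_iff₀ (by positivity) hQ0]
  nlinarith [mul_le_mul_of_nonneg_right hkey hQ0.le]
end

section
/- Let U ⊆ ℂ be open, let X = (X₁, X₂, X₃) : ℂ → ℝ³ be a conformal harmonic immersion on U, and suppose X₁(z)² + X₂(z)² ≥ 1 + X₃(z)² for every z ∈ U. Then for every real constant c, the function h_c(z) = ½·log(X₁(z)² + X₂(z)²) + c·X₃(z) + f(X₃(z)) satisfies Δ h_c ≤ 0 on U, i.e. h_c is superharmonic on U. -/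
lemma fderiv_apply_real (φ : ℝ → ℝ) (t r : ℝ) : fderiv ℝ φ t r = r * deriv φ t := by
  have h : r = r • (1:ℝ) := by simp
  rw [h, map_smul, smul_eq_mul]
  simp [fderiv_apply_one_eq_deriv]

lemma pd_comp {u : ℂ → ℝ} {φ : ℝ → ℝ} {w : ℂ} (d : ℂ)
    (hu : DifferentiableAt ℝ u w) (hφ : DifferentiableAt ℝ φ (u w)) :
    fderiv ℝ (fun x => φ (u x)) w d = deriv φ (u w) * fderiv ℝ u w d := by
  have : (fun x => φ (u x)) = φ ∘ u := rfl
  rw [this, fderiv_comp w hφ hu]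
  simp [fderiv_apply_real, mul_comm]

lemma pd_smooth {u : ℂ → ℝ} {s : Set ℂ} (hs : IsOpen s) (hu : ContDiffOn ℝ (⊤:ℕ∞) u s) (d : ℂ) :
    ContDiffOn ℝ (⊤:ℕ∞) (fun w => fderiv ℝ u w d) s :=
  (ContinuousLinearMap.apply ℝ ℝ d).contDiff.comp_contDiffOn (hu.fderiv_of_isOpen hs (by simp))

lemma diffAt_of_cd {u : ℂ → ℝ} {s : Set ℂ} (hs : IsOpen s) (hu : ContDiffOn ℝ (⊤:ℕ∞) u s)
    {w : ℂ} (hw : w ∈ s) : DifferentiableAt ℝ u w :=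
  (hu.contDiffAt (hs.mem_nhds hw)).differentiableAt (by simp)

lemma pd2_comp {u : ℂ → ℝ} {s : Set ℂ} (hs : IsOpen s) (hu : ContDiffOn ℝ (⊤:ℕ∞) u s)
    {T : Set ℝ} (hT : IsOpen T) {φ : ℝ → ℝ} (hφ : ContDiffOn ℝ (⊤:ℕ∞) φ T)
    (hmap : ∀ w ∈ s, u w ∈ T) {z : ℂ} (hz : z ∈ s) (d : ℂ) :
    fderiv ℝ (fun w => fderiv ℝ (fun x => φ (u x)) w d) z d
      = deriv φ (u z) * fderiv ℝ (fun w => fderiv ℝ u w d) z d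
        + deriv (deriv φ) (u z) * (fderiv ℝ u z d)^2 := by
  have hdu : ∀ w ∈ s, DifferentiableAt ℝ u w := fun w hw => diffAt_of_cd hs hu hw
  have hφd : ∀ w ∈ s, DifferentiableAt ℝ φ (u w) := fun w hw =>
    ((hφ.contDiffAt (hT.mem_nhds (hmap w hw))).differentiableAt (by simp))
  have hev : (fun w => fderiv ℝ (fun x => φ (u x)) w d)
      =ᶠ[nhds z] (fun w => deriv φ (u w) * fderiv ℝ u w d) := by
    filter_upwards [hs.mem_nhds hz] with w hw
    exact pd_comp d (hdu w hw) (hφd w hw)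
  rw [hev.fderiv_eq]
  have hder : ContDiffOn ℝ (⊤:ℕ∞) (deriv φ) T := hφ.deriv_of_isOpen hT (by simp)
  have h1 : DifferentiableAt ℝ (fun w => deriv φ (u w)) z :=
    ((hder.contDiffAt (hT.mem_nhds (hmap z hz))).differentiableAt (by simp)).comp z (hdu z hz)
  have h2 : DifferentiableAt ℝ (fun w => fderiv ℝ u w d) z :=
    diffAt_of_cd hs (pd_smooth hs hu d) hz
  rw [fderiv_fun_mul h1 h2]
  have h3 : fderiv ℝ (fun w => deriv φ (u w)) z d = deriv (deriv φ) (u z) * fderiv ℝ u z d :=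
    pd_comp d (hdu z hz) ((hder.contDiffAt (hT.mem_nhds (hmap z hz))).differentiableAt (by simp))
  simp only [ContinuousLinearMap.add_apply, ContinuousLinearMap.coe_smul',
    Pi.smul_apply, smul_eq_mul, h3]
  ring

lemma lap_comp {u : ℂ → ℝ} {s : Set ℂ} (hs : IsOpen s) (hu : ContDiffOn ℝ (⊤:ℕ∞) u s)
    {T : Set ℝ} (hT : IsOpen T) {φ : ℝ → ℝ} (hφ : ContDiffOn ℝ (⊤:ℕ∞) φ T)
    (hmap : ∀ w ∈ s, u w ∈ T) {z : ℂ} (hz : z ∈ s) :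
    lap (fun x => φ (u x)) z
      = deriv φ (u z) * lap u z
        + deriv (deriv φ) (u z) * ((pdx u z)^2 + (pdy u z)^2) := by
  have e1 : ∀ F : ℂ → ℝ, pdx F = fun w => fderiv ℝ F w 1 := fun F => rfl
  have e2 : ∀ F : ℂ → ℝ, pdy F = fun w => fderiv ℝ F w Complex.I := fun F => rfl
  simp only [lap, pdx, pdy, e1, e2]
  rw [pd2_comp hs hu hT hφ hmap hz 1, pd2_comp hs hu hT hφ hmap hz Complex.I]
  ring

lemma pd2_add {u v : ℂ → ℝ} {s : Set ℂ} (hs : IsOpen s)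
    (hu : ContDiffOn ℝ (⊤:ℕ∞) u s) (hv : ContDiffOn ℝ (⊤:ℕ∞) v s) {z : ℂ} (hz : z ∈ s) (d : ℂ) :
    fderiv ℝ (fun w => fderiv ℝ (fun x => u x + v x) w d) z d
      = fderiv ℝ (fun w => fderiv ℝ u w d) z d + fderiv ℝ (fun w => fderiv ℝ v w d) z d := by
  have hev : (fun w => fderiv ℝ (fun x => u x + v x) w d)
      =ᶠ[nhds z] (fun w => fderiv ℝ u w d + fderiv ℝ v w d) := by
    filter_upwards [hs.mem_nhds hz] with w hw
    rw [fderiv_fun_add (diffAt_of_cd hs hu hw) (diffAt_of_cd hs hv hw)]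
    simp
  rw [hev.fderiv_eq, fderiv_fun_add (diffAt_of_cd hs (pd_smooth hs hu d) hz)
    (diffAt_of_cd hs (pd_smooth hs hv d) hz)]
  simp

lemma pd2_const_mul {u : ℂ → ℝ} {s : Set ℂ} (hs : IsOpen s) (a : ℝ)
    (hu : ContDiffOn ℝ (⊤:ℕ∞) u s) {z : ℂ} (hz : z ∈ s) (d : ℂ) :
    fderiv ℝ (fun w => fderiv ℝ (fun x => a * u x) w d) z d
      = a * fderiv ℝ (fun w => fderiv ℝ u w d) z d := by
  have hev : (fun w => fderiv ℝ (fun x => a * u x) w d)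
      =ᶠ[nhds z] (fun w => a * fderiv ℝ u w d) := by
    filter_upwards [hs.mem_nhds hz] with w hw
    rw [fderiv_const_mul (diffAt_of_cd hs hu hw) a]
    simp
  rw [hev.fderiv_eq, fderiv_const_mul (diffAt_of_cd hs (pd_smooth hs hu d) hz) a]
  simp

lemma lap_add {u v : ℂ → ℝ} {s : Set ℂ} (hs : IsOpen s)
    (hu : ContDiffOn ℝ (⊤:ℕ∞) u s) (hv : ContDiffOn ℝ (⊤:ℕ∞) v s) {z : ℂ} (hz : z ∈ s) :
    lap (fun x => u x + v x) z = lap u z + lap v z := by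
  have e1 : ∀ F : ℂ → ℝ, pdx F = fun w => fderiv ℝ F w 1 := fun F => rfl
  have e2 : ∀ F : ℂ → ℝ, pdy F = fun w => fderiv ℝ F w Complex.I := fun F => rfl
  simp only [lap, pdx, pdy, e1, e2]
  rw [pd2_add hs hu hv hz 1, pd2_add hs hu hv hz Complex.I]
  ring

lemma lap_const_mul {u : ℂ → ℝ} {s : Set ℂ} (hs : IsOpen s) (a : ℝ)
    (hu : ContDiffOn ℝ (⊤:ℕ∞) u s) {z : ℂ} (hz : z ∈ s) :
    lap (fun x => a * u x) z = a * lap u z := by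
  have e1 : ∀ F : ℂ → ℝ, pdx F = fun w => fderiv ℝ F w 1 := fun F => rfl
  have e2 : ∀ F : ℂ → ℝ, pdy F = fun w => fderiv ℝ F w Complex.I := fun F => rfl
  simp only [lap, pdx, pdy, e1, e2]
  rw [pd2_const_mul hs a hu hz 1, pd2_const_mul hs a hu hz Complex.I]
  ring

-- squares
lemma deriv_sq : deriv (fun t : ℝ => t^2) = fun t => 2*t := by
  funext t; simp [deriv_pow]
lemma deriv2_sq (t : ℝ) : deriv (deriv (fun s : ℝ => s^2)) t = 2 := by
  rw [deriv_sq]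
  have h : HasDerivAt (fun t : ℝ => 2*t) 2 t := by simpa using (hasDerivAt_id t).const_mul (2:ℝ)
  rw [h.deriv]

-- half log
lemma cd_halflog : ContDiffOn ℝ (⊤:ℕ∞) (fun t : ℝ => (1/2 : ℝ) * Real.log t) (Set.Ioi 0) :=
  contDiffOn_const.mul (Real.contDiffOn_log.mono (by intro x hx; exact ne_of_gt hx))

lemma deriv_halflog {t : ℝ} (ht : 0 < t) :
    deriv (fun s : ℝ => (1/2 : ℝ) * Real.log s) t = 1/(2*t) := by
  have h : HasDerivAt (fun s : ℝ => (1/2 : ℝ) * Real.log s) ((1/2) * t⁻¹) t :=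
    (Real.hasDerivAt_log (ne_of_gt ht)).const_mul (1/2)
  rw [h.deriv]; field_simp

lemma deriv2_halflog {t : ℝ} (ht : 0 < t) :
    deriv (deriv (fun s : ℝ => (1/2 : ℝ) * Real.log s)) t = -(1/(2*t^2)) := by
  have hev : deriv (fun s : ℝ => (1/2 : ℝ) * Real.log s) =ᶠ[nhds t] fun s => (1/2) * s⁻¹ := by
    filter_upwards [isOpen_Ioi.mem_nhds ht] with s hs
    rw [deriv_halflog hs]; field_simp
  rw [hev.deriv_eq]
  have h : HasDerivAt (fun s : ℝ => (1/2 : ℝ) * s⁻¹) ((1/2) * (-(t^2)⁻¹)) t :=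
    (hasDerivAt_inv (ne_of_gt ht)).const_mul (1/2)
  rw [h.deriv]; field_simp

-- f
lemma cd_f : ContDiff ℝ (⊤:ℕ∞) (fun t : ℝ => -t * Real.arctan t + (1/2 : ℝ) * Real.log (t^2+1)) := by
  have h2 : ContDiff ℝ (⊤:ℕ∞) (fun t : ℝ => Real.log (t^2+1)) := by
    rw [contDiff_iff_contDiffAt]
    intro t
    exact (Real.contDiffAt_log.mpr (by positivity)).comp t (by fun_prop)
  exact ((contDiff_id.neg.mul Real.contDiff_arctan).add (contDiff_const.mul h2))

lemma hasDerivAt_f (t : ℝ) :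
    HasDerivAt (fun s : ℝ => -s * Real.arctan s + (1/2 : ℝ) * Real.log (s^2+1)) (-Real.arctan t) t := by
  have h1 : HasDerivAt (fun s : ℝ => -s * Real.arctan s)
      ((-1) * Real.arctan t + (-t) * (1/(1+t^2))) t :=
    ((hasDerivAt_id t).neg).mul (Real.hasDerivAt_arctan t)
  have hg : HasDerivAt (fun s : ℝ => s^2+1) (2*t) t := by
    simpa using (hasDerivAt_pow 2 t).add_const 1
  have h2 : HasDerivAt (fun s : ℝ => Real.log (s^2+1)) ((t^2+1)⁻¹ * (2*t)) t :=
    (Real.hasDerivAt_log (by positivity)).comp t hg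
  have h := h1.add (h2.const_mul (1/2 : ℝ))
  refine h.congr_deriv ?_
  field_simp
  ring
lemma deriv_f : deriv (fun s : ℝ => -s * Real.arctan s + (1/2 : ℝ) * Real.log (s^2+1))
    = fun t => -Real.arctan t := by
  funext t; exact (hasDerivAt_f t).deriv
lemma deriv2_f (t : ℝ) :
    deriv (deriv (fun s : ℝ => -s * Real.arctan s + (1/2 : ℝ) * Real.log (s^2+1))) t
      = -(1/(1+t^2)) := by
  rw [deriv_f]
  have h : HasDerivAt (fun s : ℝ => -Real.arctan s) (-(1/(1+t^2))) t := (Real.hasDerivAt_arctan t).neg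
  rw [h.deriv]

lemma key_ineq (a1 a2 a3 b1 b2 b3 x1 x2 l : ℝ)
    (hc : a1*b1+a2*b2+a3*b3 = 0) (hna : a1^2+a2^2+a3^2 = l^2)
    (hnb : b1^2+b2^2+b3^2 = l^2) (hl : 0 < l) :
    (x1^2+x2^2)*(l^2 - (a3^2+b3^2)) ≤ (x1*a1+x2*a2)^2 + (x1*b1+x2*b2)^2 := by
  set w1 := a2*b3 - a3*b2 with hw1
  set w2 := a3*b1 - a1*b3 with hw2
  set w3 := a1*b2 - a2*b1 with hw3d
  set R := x1^2 + x2^2 with hR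
  set Q := (x1*a1+x2*a2)^2 + (x1*b1+x2*b2)^2 with hQ
  have h12 : a1*b1 + a2*b2 = -(a3*b3) := by linarith
  have ha12 : a1^2+a2^2 = l^2 - a3^2 := by linarith
  have hb12 : b1^2+b2^2 = l^2 - b3^2 := by linarith
  have hw3 : w3^2 = l^4 - l^2*(a3^2+b3^2) := by
    have expand : w3^2 = (a1^2+a2^2)*(b1^2+b2^2) - (a1*b1+a2*b2)^2 := by rw [hw3d]; ring
    rw [expand, h12, ha12, hb12]; ring
  have hww : w1^2+w2^2+w3^2 = l^4 := by
    have expand : w1^2+w2^2+w3^2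
        = (a1^2+a2^2+a3^2)*(b1^2+b2^2+b3^2) - (a1*b1+a2*b2+a3*b3)^2 := by
      rw [hw1, hw2, hw3d]; ring
    rw [expand, hna, hnb, hc]; ring
  have lag : (w1^2+w2^2+w3^2)*R - (x1*w1+x2*w2)^2
      = (b1^2+b2^2+b3^2)*(x1*a1+x2*a2)^2 + (a1^2+a2^2+a3^2)*(x1*b1+x2*b2)^2
        - 2*(a1*b1+a2*b2+a3*b3)*((x1*a1+x2*a2)*(x1*b1+x2*b2)) := by
    rw [hw1, hw2, hw3d, hR]; ring
  have lag2 : l^2*Q = l^4*R - (x1*w1+x2*w2)^2 := by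
    rw [hna, hnb, hc, hww] at lag
    rw [hQ]; linarith [lag]
  have cauchy : (x1*w1+x2*w2)^2 ≤ R*(w1^2+w2^2) := by
    rw [hR]; nlinarith [sq_nonneg (x1*w2 - x2*w1)]
  have hl2 : (0:ℝ) < l^2 := by positivity
  have hw12 : w1^2 + w2^2 = l^2*(a3^2+b3^2) := by linarith
  have cauchy' : (x1*w1+x2*w2)^2 ≤ R*(l^2*(a3^2+b3^2)) := by rw [← hw12]; exact cauchy
  have hstep : l^2*(R*(l^2 - (a3^2+b3^2))) ≤ l^2*Q := by
    have e : l^2*(R*(l^2-(a3^2+b3^2))) = l^4*R - R*(l^2*(a3^2+b3^2)) := by ring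
    rw [e, lag2]; linarith
  exact (mul_le_mul_iff_right₀ hl2).mp hstep

set_option maxHeartbeats 1000000 in
lemma final_arith (a1 a2 a3 b1 b2 b3 x1 x2 x3 l : ℝ)
    (hc : a1*b1+a2*b2+a3*b3 = 0) (hna : a1^2+a2^2+a3^2 = l^2)
    (hnb : b1^2+b2^2+b3^2 = l^2) (hl : 0 < l)
    (hbig : 1 + x3^2 ≤ x1^2 + x2^2) :
    1/(2*(x1^2+x2^2)) * (2*(a1^2+b1^2) + 2*(a2^2+b2^2))
      - 1/(2*(x1^2+x2^2)^2) * ((2*x1*a1+2*x2*a2)^2 + (2*x1*b1+2*x2*b2)^2)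
      - 1/(1+x3^2) * (a3^2+b3^2) ≤ 0 := by
  have key := key_ineq a1 a2 a3 b1 b2 b3 x1 x2 l hc hna hnb hl
  set R := x1^2 + x2^2 with hRd
  set P := 1 + x3^2 with hPd
  set T := a3^2 + b3^2 with hTd
  set Q := (x1*a1+x2*a2)^2 + (x1*b1+x2*b2)^2 with hQd
  have hP : (0:ℝ) < P := by positivity
  have hR : (0:ℝ) < R := lt_of_lt_of_le hP hbig
  have hT : (0:ℝ) ≤ T := by positivity
  have e : 1/(2*R) * (2*(a1^2+b1^2) + 2*(a2^2+b2^2))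
      - 1/(2*R^2) * ((2*x1*a1+2*x2*a2)^2 + (2*x1*b1+2*x2*b2)^2)
      - 1/P * T
      = (R*P*(2*(a1^2+b1^2)+2*(a2^2+b2^2)) - 4*P*Q - 2*R^2*T) / (2*R^2*P) := by
    rw [hQd, hTd]
    field_simp
    ring
  rw [e]
  apply div_nonpos_of_nonpos_of_nonneg _ (by positivity)
  have hS : a1^2+b1^2 + (a2^2+b2^2) = 2*l^2 - T := by rw [hTd]; linarith
  have hQ' : 4*P*(R*(l^2 - T)) ≤ 4*P*Q := by
    apply mul_le_mul_of_nonneg_left key (by positivity)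
  have hBD : R*P*T ≤ R^2*T := by nlinarith [mul_nonneg hR.le hT]
  have hN : R*P*(2*(a1^2+b1^2)+2*(a2^2+b2^2)) = 4*R*P*l^2 - 2*R*P*T := by
    linear_combination (2*R*P) * hS
  nlinarith [hN, hQ', hBD]

/-- For a conformal harmonic immersion `X = (X₁, X₂, X₃)` on `U` with
`X₁² + X₂² ≥ 1 + X₃²` on `U`, and `f(t) = −t·arctan t + ½ log(t² + 1)`, the function
`h_c = ½ log(X₁² + X₂²) + c·X₃ + f(X₃)` is superharmonic on `U` for every real `c`. -/
theorem h_c_superharmonic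
    (U : Set ℂ) (hU : IsOpen U) (X₁ X₂ X₃ : ℂ → ℝ)
    (hsm₁ : ContDiffOn ℝ (⊤ : ℕ∞) X₁ U) (hsm₂ : ContDiffOn ℝ (⊤ : ℕ∞) X₂ U)
    (hsm₃ : ContDiffOn ℝ (⊤ : ℕ∞) X₃ U)
    (hharm : ∀ z ∈ U, lap X₁ z = 0 ∧ lap X₂ z = 0 ∧ lap X₃ z = 0)
    (lam : ℂ → ℝ)
    (hconf : ∀ z ∈ U,
      pdx X₁ z * pdy X₁ z + pdx X₂ z * pdy X₂ z + pdx X₃ z * pdy X₃ z = 0)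
    (hnormx : ∀ z ∈ U, (pdx X₁ z) ^ 2 + (pdx X₂ z) ^ 2 + (pdx X₃ z) ^ 2 = (lam z) ^ 2)
    (hnormy : ∀ z ∈ U, (pdy X₁ z) ^ 2 + (pdy X₂ z) ^ 2 + (pdy X₃ z) ^ 2 = (lam z) ^ 2)
    (hlam : ∀ z ∈ U, 0 < lam z)
    (hbig : ∀ z ∈ U, 1 + (X₃ z) ^ 2 ≤ (X₁ z) ^ 2 + (X₂ z) ^ 2)
    (f : ℝ → ℝ)
    (hf : ∀ t, f t = -t * Real.arctan t + (1 / 2) * Real.log (t ^ 2 + 1))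
    (c : ℝ) :
    ∀ z ∈ U,
      lap (fun w => (1 / 2) * Real.log ((X₁ w) ^ 2 + (X₂ w) ^ 2)
            + c * X₃ w + f (X₃ w)) z ≤ 0 := by
  intro z hz
  -- notation
  set a1 := pdx X₁ z with ha1
  set a2 := pdx X₂ z with ha2
  set a3 := pdx X₃ z with ha3
  set b1 := pdy X₁ z with hb1
  set b2 := pdy X₂ z with hb2
  set b3 := pdy X₃ z with hb3
  have hfe : f = fun t : ℝ => -t * Real.arctan t + (1/2 : ℝ) * Real.log (t^2+1) := funext hf
  -- the inner function ρ = X₁² + X₂²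
  set ρ : ℂ → ℝ := fun w => (X₁ w)^2 + (X₂ w)^2 with hρd
  have hsρ : ContDiffOn ℝ (⊤:ℕ∞) ρ U := (hsm₁.pow 2).add (hsm₂.pow 2)
  have hρpos : ∀ w ∈ U, ρ w ∈ Set.Ioi (0:ℝ) := fun w hw =>
    lt_of_lt_of_le (by positivity) (hbig w hw)
  have hRpos : 0 < ρ z := hρpos z hz
  have cdsq : ContDiff ℝ (⊤:ℕ∞) (fun t : ℝ => t^2) := by fun_prop
  -- smoothness of summands
  have hA : ContDiffOn ℝ (⊤:ℕ∞) (fun w => (1/2 : ℝ) * Real.log (ρ w)) U :=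
    cd_halflog.comp hsρ (fun w hw => hρpos w hw)
  have hB : ContDiffOn ℝ (⊤:ℕ∞) (fun w => c * X₃ w) U := contDiffOn_const.mul hsm₃
  have hC : ContDiffOn ℝ (⊤:ℕ∞) (fun w => f (X₃ w)) U := by
    rw [hfe]; exact cd_f.comp_contDiffOn hsm₃
  -- split the Laplacian
  have hsplit : lap (fun w => (1/2 : ℝ) * Real.log ((X₁ w)^2 + (X₂ w)^2)
        + c * X₃ w + f (X₃ w)) z
      = lap (fun w => (1/2 : ℝ) * Real.log (ρ w)) z + lap (fun w => c * X₃ w) z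
        + lap (fun w => f (X₃ w)) z := by
    rw [lap_add hU (hA.add hB) hC hz, lap_add hU hA hB hz]
  -- Laplacian of c * X₃
  have hlapB : lap (fun w => c * X₃ w) z = 0 := by
    rw [lap_const_mul hU c hsm₃ hz, (hharm z hz).2.2, mul_zero]
  -- Laplacian of f ∘ X₃
  have hlapC : lap (fun w => f (X₃ w)) z
      = -(1/(1+(X₃ z)^2)) * (a3^2 + b3^2) := by
    rw [hfe]
    rw [lap_comp hU hsm₃ isOpen_univ cd_f.contDiffOn (fun w _ => Set.mem_univ _) hz]
    rw [(hharm z hz).2.2, deriv2_f (X₃ z), mul_zero, zero_add]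
  -- Laplacian of the squares
  have hlapsq1 : lap (fun w => (X₁ w)^2) z = 2*(a1^2 + b1^2) := by
    rw [lap_comp hU hsm₁ isOpen_univ cdsq.contDiffOn (fun w _ => Set.mem_univ _) hz]
    rw [(hharm z hz).1, deriv2_sq (X₁ z), mul_zero, zero_add]
  have hlapsq2 : lap (fun w => (X₂ w)^2) z = 2*(a2^2 + b2^2) := by
    rw [lap_comp hU hsm₂ isOpen_univ cdsq.contDiffOn (fun w _ => Set.mem_univ _) hz]
    rw [(hharm z hz).2.1, deriv2_sq (X₂ z), mul_zero, zero_add]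
  have hlapρ : lap ρ z = 2*(a1^2 + b1^2) + 2*(a2^2 + b2^2) := by
    rw [hρd]
    rw [lap_add hU (hsm₁.pow 2) (hsm₂.pow 2) hz, hlapsq1, hlapsq2]
  -- first derivatives of ρ
  have hd1 : DifferentiableAt ℝ X₁ z := diffAt_of_cd hU hsm₁ hz
  have hd2 : DifferentiableAt ℝ X₂ z := diffAt_of_cd hU hsm₂ hz
  have hpdρ : ∀ d : ℂ, fderiv ℝ ρ z d
      = 2*X₁ z * fderiv ℝ X₁ z d + 2*X₂ z * fderiv ℝ X₂ z d := by
    intro d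
    rw [hρd]
    have e1 : fderiv ℝ (fun w => (X₁ w)^2) z d = 2*X₁ z * fderiv ℝ X₁ z d := by
      rw [pd_comp d hd1 (cdsq.differentiable (by simp) (X₁ z) : DifferentiableAt ℝ _ _)]
      rw [deriv_sq]
    have e2 : fderiv ℝ (fun w => (X₂ w)^2) z d = 2*X₂ z * fderiv ℝ X₂ z d := by
      rw [pd_comp d hd2 (cdsq.differentiable (by simp) (X₂ z) : DifferentiableAt ℝ _ _)]
      rw [deriv_sq]
    rw [fderiv_fun_add (hd1.fun_pow 2) (hd2.fun_pow 2)]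
    simp only [ContinuousLinearMap.add_apply]
    rw [e1, e2]
  have hpdxρ : pdx ρ z = 2*X₁ z * a1 + 2*X₂ z * a2 := hpdρ 1
  have hpdyρ : pdy ρ z = 2*X₁ z * b1 + 2*X₂ z * b2 := hpdρ Complex.I
  -- Laplacian of (1/2) log ρ
  have hlapA : lap (fun w => (1/2 : ℝ) * Real.log (ρ w)) z
      = 1/(2*ρ z) * (2*(a1^2 + b1^2) + 2*(a2^2 + b2^2))
        + (-(1/(2*(ρ z)^2))) * ((2*X₁ z * a1 + 2*X₂ z * a2)^2 + (2*X₁ z * b1 + 2*X₂ z * b2)^2) := by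
    rw [lap_comp hU hsρ isOpen_Ioi cd_halflog (fun w hw => hρpos w hw) hz]
    rw [deriv_halflog hRpos, deriv2_halflog hRpos, hlapρ, hpdxρ, hpdyρ]
  -- put it together
  rw [hsplit, hlapB, hlapC, hlapA]
  have harith := final_arith a1 a2 a3 b1 b2 b3 (X₁ z) (X₂ z) (X₃ z) (lam z)
    (hconf z hz) (hnormx z hz) (hnormy z hz) (hlam z hz) (hbig z hz)
  have hshape : 1/(2*ρ z) * (2*(a1^2 + b1^2) + 2*(a2^2 + b2^2))
        + (-(1/(2*(ρ z)^2))) * ((2*X₁ z * a1 + 2*X₂ z * a2)^2 + (2*X₁ z * b1 + 2*X₂ z * b2)^2)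
        + 0
        + (-(1/(1+(X₃ z)^2)) * (a3^2 + b3^2))
      = 1/(2*((X₁ z)^2+(X₂ z)^2)) * (2*(a1^2+b1^2) + 2*(a2^2+b2^2))
        - 1/(2*((X₁ z)^2+(X₂ z)^2)^2) * ((2*(X₁ z)*a1+2*(X₂ z)*a2)^2 + (2*(X₁ z)*b1+2*(X₂ z)*b2)^2)
        - 1/(1+(X₃ z)^2) * (a3^2+b3^2) := by
    rw [hρd]; ring
  linarith [harith, hshape]
end

section
/- Let U ⊆ ℂ be open, let X = (X₁, X₂, X₃) : ℂ → ℝ³ be a conformal harmonic immersion on U, and suppose X₁(z)² + X₂(z)² ≥ 1 for every z ∈ U. Then the function h(z) = ½·log(X₁(z)² + X₂(z)²) − X₃(z)² satisfies Δh ≤ 0 on U, i.e. h is superharmonic on U. -/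
section Aux

/-- Generic directional partial derivative. -/
noncomputable def pd (e : ℂ) (u : ℂ → ℝ) (z : ℂ) : ℝ := fderiv ℝ u z e

lemma pdx_eq_pd (u : ℂ → ℝ) : pdx u = pd 1 u := rfl
lemma pdy_eq_pd (u : ℂ → ℝ) : pdy u = pd Complex.I u := rfl

lemma lap_eq_pd (u : ℂ → ℝ) (z : ℂ) :
    lap u z = pd 1 (pd 1 u) z + pd Complex.I (pd Complex.I u) z := rfl

variable {u v : ℂ → ℝ} {z e : ℂ}

lemma contDiffAt_pd (e : ℂ) (hu : ContDiffAt ℝ (⊤:ℕ∞) u z) :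
    ContDiffAt ℝ (⊤:ℕ∞) (pd e u) z :=
  ((ContinuousLinearMap.apply ℝ ℝ e).contDiff.contDiffAt).comp z
    (hu.fderiv_right (by simp))

lemma diffAt_pd (e : ℂ) (hu : ContDiffAt ℝ (⊤:ℕ∞) u z) :
    DifferentiableAt ℝ (pd e u) z :=
  (contDiffAt_pd e hu).differentiableAt (by simp)

lemma pd_add_s5 (hu : DifferentiableAt ℝ u z) (hv : DifferentiableAt ℝ v z) :
    pd e (fun w => u w + v w) z = pd e u z + pd e v z := by
  unfold pd; rw [fderiv_fun_add hu hv]; simp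

lemma pd_sub (hu : DifferentiableAt ℝ u z) (hv : DifferentiableAt ℝ v z) :
    pd e (fun w => u w - v w) z = pd e u z - pd e v z := by
  unfold pd; rw [fderiv_fun_sub hu hv]; simp

lemma pd_mul_s5 (hu : DifferentiableAt ℝ u z) (hv : DifferentiableAt ℝ v z) :
    pd e (fun w => u w * v w) z = u z * pd e v z + v z * pd e u z := by
  unfold pd; rw [fderiv_fun_mul hu hv]; simp [smul_eq_mul]

lemma pd_const_mul (c : ℝ) (hu : DifferentiableAt ℝ u z) :
    pd e (fun w => c * u w) z = c * pd e u z := by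
  unfold pd; rw [fderiv_const_mul hu]; simp

lemma pd_sq (hu : DifferentiableAt ℝ u z) :
    pd e (fun w => (u w) ^ 2) z = 2 * u z * pd e u z := by
  have h : (fun w => (u w) ^ 2) = fun w => u w * u w := by funext w; ring
  rw [h, pd_mul_s5 hu hu]; ring

lemma pd_log_s5 (hu : DifferentiableAt ℝ u z) (h0 : u z ≠ 0) :
    pd e (fun w => Real.log (u w)) z = (u z)⁻¹ * pd e u z := by
  unfold pd; rw [(hu.hasFDerivAt.log h0).fderiv]; simp

lemma diffAt_log (hu : DifferentiableAt ℝ u z) (h0 : u z ≠ 0) :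
    DifferentiableAt ℝ (fun w => Real.log (u w)) z :=
  (hu.hasFDerivAt.log h0).differentiableAt

lemma pd_inv_s5 (hu : DifferentiableAt ℝ u z) (h0 : u z ≠ 0) :
    pd e (fun w => (u w)⁻¹) z = -((u z) ^ 2)⁻¹ * pd e u z := by
  unfold pd
  have h := ((hasDerivAt_inv h0).comp_hasFDerivAt z hu.hasFDerivAt).fderiv
  rw [show (fun w => (u w)⁻¹) = (fun y => y⁻¹) ∘ u from rfl, h]
  simp [smul_eq_mul]

lemma diffAt_inv (hu : DifferentiableAt ℝ u z) (h0 : u z ≠ 0) :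
    DifferentiableAt ℝ (fun w => (u w)⁻¹) z :=
  ((hasDerivAt_inv h0).comp_hasFDerivAt z hu.hasFDerivAt).differentiableAt

lemma key_ineq_s5 (a₁ a₂ a₃ b₁ b₂ b₃ x₁ x₂ : ℝ)
    (horth : a₁*b₁ + a₂*b₂ + a₃*b₃ = 0)
    (hnorm : a₁^2 + a₂^2 + a₃^2 = b₁^2 + b₂^2 + b₃^2)
    (hF : 1 ≤ x₁^2 + x₂^2) :
    (a₁^2 + a₂^2 + b₁^2 + b₂^2) * (x₁^2 + x₂^2)
      - 2 * ((x₁*a₁ + x₂*a₂)^2 + (x₁*b₁ + x₂*b₂)^2)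
      - 2 * (a₃^2 + b₃^2) * (x₁^2 + x₂^2)^2 ≤ 0 := by
  set F : ℝ := x₁^2 + x₂^2 with hFdef
  set c : ℝ := a₃^2 + b₃^2 with hcdef
  set p : ℝ := a₁^2 - a₂^2 + b₁^2 - b₂^2 with hpdef
  set q : ℝ := 2*(a₁*a₂ + b₁*b₂) with hqdef
  set N : ℝ := (a₁^2 + a₂^2 + b₁^2 + b₂^2) * F
      - 2 * ((x₁*a₁ + x₂*a₂)^2 + (x₁*b₁ + x₂*b₂)^2) with hNdef
  have hNe : N = -p*(x₁^2 - x₂^2) - 2*q*(x₁*x₂) := by rw [hNdef, hpdef, hqdef, hFdef]; ring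
  have hpq : p^2 + q^2 = c^2 := by
    rw [hpdef, hqdef, hcdef]
    linear_combination (a₁^2 + a₂^2 - b₁^2 - b₂^2 + b₃^2 - a₃^2) * hnorm
      + (4*(a₁*b₁ + a₂*b₂) - 4*a₃*b₃) * horth
  have hc0 : 0 ≤ c := by positivity
  have hF0 : (0:ℝ) ≤ F := by positivity
  have hN2 : N^2 ≤ (c*F)^2 := by
    have hcs : N^2 ≤ (p^2 + q^2) * ((x₁^2 - x₂^2)^2 + (2*x₁*x₂)^2) := by
      rw [hNe]
      nlinarith [sq_nonneg (p*(2*x₁*x₂) - q*(x₁^2 - x₂^2))]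
    calc N^2 ≤ (p^2 + q^2) * ((x₁^2 - x₂^2)^2 + (2*x₁*x₂)^2) := hcs
      _ = (c*F)^2 := by rw [hpq, hFdef]; ring
  have hNle : N ≤ c * F := by nlinarith [mul_nonneg hc0 hF0]
  have : c * F ≤ 2 * c * F^2 := by
    have hm := mul_nonneg (mul_nonneg hc0 hF0) (by linarith : (0:ℝ) ≤ 2*F - 1)
    linarith
  linarith

end Aux

/-- For a conformal harmonic immersion `X = (X₁, X₂, X₃)` on `U` with `X₁² + X₂² ≥ 1`
on `U`, the function `h = ½ log(X₁² + X₂²) − X₃²` is superharmonic on `U`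
(key to Theorem 3.1 of the paper). -/
theorem h_superharmonic
    (U : Set ℂ) (hU : IsOpen U) (X₁ X₂ X₃ : ℂ → ℝ)
    (hsm₁ : ContDiffOn ℝ (⊤ : ℕ∞) X₁ U) (hsm₂ : ContDiffOn ℝ (⊤ : ℕ∞) X₂ U)
    (hsm₃ : ContDiffOn ℝ (⊤ : ℕ∞) X₃ U)
    (hharm : ∀ z ∈ U, lap X₁ z = 0 ∧ lap X₂ z = 0 ∧ lap X₃ z = 0)
    (lam : ℂ → ℝ)
    (hconf : ∀ z ∈ U,
      pdx X₁ z * pdy X₁ z + pdx X₂ z * pdy X₂ z + pdx X₃ z * pdy X₃ z = 0)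
    (hnormx : ∀ z ∈ U, (pdx X₁ z) ^ 2 + (pdx X₂ z) ^ 2 + (pdx X₃ z) ^ 2 = (lam z) ^ 2)
    (hnormy : ∀ z ∈ U, (pdy X₁ z) ^ 2 + (pdy X₂ z) ^ 2 + (pdy X₃ z) ^ 2 = (lam z) ^ 2)
    (hlam : ∀ z ∈ U, 0 < lam z)
    (hbig : ∀ z ∈ U, 1 ≤ (X₁ z) ^ 2 + (X₂ z) ^ 2) :
    ∀ z ∈ U,
      lap (fun w => (1 / 2) * Real.log ((X₁ w) ^ 2 + (X₂ w) ^ 2) - (X₃ w) ^ 2) z ≤ 0 := by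
  intro z hz
  simp only [pdx_eq_pd, pdy_eq_pd] at hconf hnormx hnormy
  set h : ℂ → ℝ := fun w => (1 / 2) * Real.log ((X₁ w) ^ 2 + (X₂ w) ^ 2) - (X₃ w) ^ 2 with hhdef
  -- smoothness at points of U
  have hc : ∀ w ∈ U, ContDiffAt ℝ (⊤:ℕ∞) X₁ w ∧ ContDiffAt ℝ (⊤:ℕ∞) X₂ w ∧
      ContDiffAt ℝ (⊤:ℕ∞) X₃ w := fun w hw =>
    ⟨hsm₁.contDiffAt (hU.mem_nhds hw), hsm₂.contDiffAt (hU.mem_nhds hw),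
      hsm₃.contDiffAt (hU.mem_nhds hw)⟩
  have hFpos : ∀ w ∈ U, (0:ℝ) < (X₁ w) ^ 2 + (X₂ w) ^ 2 := fun w hw =>
    lt_of_lt_of_le one_pos (hbig w hw)
  -- first derivative formula, at every point of U
  have key1 : ∀ e : ℂ, ∀ w ∈ U, pd e h w =
      (X₁ w * pd e X₁ w + X₂ w * pd e X₂ w) / ((X₁ w) ^ 2 + (X₂ w) ^ 2)
        - 2 * X₃ w * pd e X₃ w := by
    intro e w hw
    obtain ⟨hc₁, hc₂, hc₃⟩ := hc w hw
    have hd₁ : DifferentiableAt ℝ X₁ w := hc₁.differentiableAt (by simp)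
    have hd₂ : DifferentiableAt ℝ X₂ w := hc₂.differentiableAt (by simp)
    have hd₃ : DifferentiableAt ℝ X₃ w := hc₃.differentiableAt (by simp)
    have hdF : DifferentiableAt ℝ (fun y => (X₁ y) ^ 2 + (X₂ y) ^ 2) w :=
      (hd₁.pow 2).add (hd₂.pow 2)
    have hF0 : (X₁ w) ^ 2 + (X₂ w) ^ 2 ≠ 0 := ne_of_gt (hFpos w hw)
    have e1 : pd e h w = pd e (fun y => (1/2) * Real.log ((X₁ y) ^ 2 + (X₂ y) ^ 2)) w
        - pd e (fun y => (X₃ y) ^ 2) w := by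
      rw [hhdef]
      exact pd_sub ((diffAt_log hdF hF0).const_mul _) (hd₃.pow 2)
    rw [e1, pd_const_mul _ (diffAt_log hdF hF0), pd_log_s5 hdF hF0,
      pd_add_s5 (u := fun y => X₁ y ^ 2) (v := fun y => X₂ y ^ 2) (hd₁.pow 2) (hd₂.pow 2), pd_sq hd₁, pd_sq hd₂, pd_sq hd₃]
    field_simp
  -- second derivative formula at z
  have key2 : ∀ e : ℂ, pd e (pd e h) z =
      ((pd e X₁ z) ^ 2 + (pd e X₂ z) ^ 2
          + X₁ z * pd e (pd e X₁) z + X₂ z * pd e (pd e X₂) z)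
            / ((X₁ z) ^ 2 + (X₂ z) ^ 2)
        - (X₁ z * pd e X₁ z + X₂ z * pd e X₂ z)
            * (2 * X₁ z * pd e X₁ z + 2 * X₂ z * pd e X₂ z)
            / ((X₁ z) ^ 2 + (X₂ z) ^ 2) ^ 2
        - 2 * (pd e X₃ z) ^ 2 - 2 * X₃ z * pd e (pd e X₃) z := by
    intro e
    obtain ⟨hc₁, hc₂, hc₃⟩ := hc z hz
    have hd₁ : DifferentiableAt ℝ X₁ z := hc₁.differentiableAt (by simp)
    have hd₂ : DifferentiableAt ℝ X₂ z := hc₂.differentiableAt (by simp)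
    have hd₃ : DifferentiableAt ℝ X₃ z := hc₃.differentiableAt (by simp)
    have hp₁ : DifferentiableAt ℝ (pd e X₁) z := diffAt_pd e hc₁
    have hp₂ : DifferentiableAt ℝ (pd e X₂) z := diffAt_pd e hc₂
    have hp₃ : DifferentiableAt ℝ (pd e X₃) z := diffAt_pd e hc₃
    have hF0 : (X₁ z) ^ 2 + (X₂ z) ^ 2 ≠ 0 := ne_of_gt (hFpos z hz)
    have hdF : DifferentiableAt ℝ (fun y => (X₁ y) ^ 2 + (X₂ y) ^ 2) z :=
      (hd₁.pow 2).add (hd₂.pow 2)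
    have hdNum : DifferentiableAt ℝ (fun y => X₁ y * pd e X₁ y + X₂ y * pd e X₂ y) z :=
      (hd₁.mul hp₁).add (hd₂.mul hp₂)
    have hdInv : DifferentiableAt ℝ (fun y => ((X₁ y) ^ 2 + (X₂ y) ^ 2)⁻¹) z :=
      diffAt_inv hdF hF0
    -- rewrite pd e h near z
    have hev : pd e h =ᶠ[nhds z]
        fun w => (X₁ w * pd e X₁ w + X₂ w * pd e X₂ w)
            * (((X₁ w) ^ 2 + (X₂ w) ^ 2)⁻¹) - 2 * X₃ w * pd e X₃ w := by
      filter_upwards [hU.mem_nhds hz] with w hw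
      rw [key1 e w hw, div_eq_mul_inv]
    have e0 : pd e (pd e h) z = pd e
        (fun w => (X₁ w * pd e X₁ w + X₂ w * pd e X₂ w)
            * (((X₁ w) ^ 2 + (X₂ w) ^ 2)⁻¹) - 2 * X₃ w * pd e X₃ w) z :=
      congrArg (fun L : ℂ →L[ℝ] ℝ => L e) hev.fderiv_eq
    rw [e0, pd_sub (u := fun w => (X₁ w * pd e X₁ w + X₂ w * pd e X₂ w)
              * (((X₁ w) ^ 2 + (X₂ w) ^ 2)⁻¹)) (v := fun w => 2 * X₃ w * pd e X₃ w)
        (hdNum.mul hdInv) ((hd₃.const_mul 2).mul hp₃),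
      pd_mul_s5 hdNum hdInv, pd_inv_s5 hdF hF0,
      pd_add_s5 (u := fun y => X₁ y * pd e X₁ y) (v := fun y => X₂ y * pd e X₂ y)
        (hd₁.mul hp₁) (hd₂.mul hp₂), pd_mul_s5 hd₁ hp₁, pd_mul_s5 hd₂ hp₂,
      pd_add_s5 (u := fun y => X₁ y ^ 2) (v := fun y => X₂ y ^ 2) (hd₁.pow 2) (hd₂.pow 2), pd_sq hd₁, pd_sq hd₂,
      pd_mul_s5 (hd₃.const_mul 2) hp₃, pd_const_mul _ hd₃]
    field_simp
    ring
  -- assemble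
  have hF1 : (1:ℝ) ≤ (X₁ z) ^ 2 + (X₂ z) ^ 2 := hbig z hz
  have hF0 : (0:ℝ) < (X₁ z) ^ 2 + (X₂ z) ^ 2 := hFpos z hz
  set x₁ := X₁ z; set x₂ := X₂ z; set x₃ := X₃ z
  set a₁ := pd 1 X₁ z; set a₂ := pd 1 X₂ z; set a₃ := pd 1 X₃ z
  set b₁ := pd Complex.I X₁ z; set b₂ := pd Complex.I X₂ z; set b₃ := pd Complex.I X₃ z
  obtain ⟨hh₁, hh₂, hh₃⟩ := hharm z hz
  rw [lap_eq_pd] at hh₁ hh₂ hh₃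
  have hlap : lap h z =
      ((a₁ ^ 2 + a₂ ^ 2 + b₁ ^ 2 + b₂ ^ 2) * (x₁ ^ 2 + x₂ ^ 2)
        - 2 * ((x₁ * a₁ + x₂ * a₂) ^ 2 + (x₁ * b₁ + x₂ * b₂) ^ 2)
        - 2 * (a₃ ^ 2 + b₃ ^ 2) * (x₁ ^ 2 + x₂ ^ 2) ^ 2) / ((x₁ ^ 2 + x₂ ^ 2) ^ 2) := by
    rw [lap_eq_pd, key2 1, key2 Complex.I]
    have h1 : pd 1 (pd 1 X₁) z = - pd Complex.I (pd Complex.I X₁) z := by linarith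
    have h2 : pd 1 (pd 1 X₂) z = - pd Complex.I (pd Complex.I X₂) z := by linarith
    have h3 : pd 1 (pd 1 X₃) z = - pd Complex.I (pd Complex.I X₃) z := by linarith
    rw [h1, h2, h3]
    field_simp
    ring
  rw [hlap]
  have horth : a₁*b₁ + a₂*b₂ + a₃*b₃ = 0 := hconf z hz
  have hnorm : a₁^2 + a₂^2 + a₃^2 = b₁^2 + b₂^2 + b₃^2 := by
    rw [hnormx z hz]; exact (hnormy z hz).symm
  have halg := key_ineq_s5 a₁ a₂ a₃ b₁ b₂ b₃ x₁ x₂ horth hnorm hF1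
  exact div_nonpos_of_nonpos_of_nonneg halg (by positivity)
end

section
/- Let U ⊆ ℂ be open and let X = (X₁, X₂, X₃) : ℂ → ℝ³ be continuously differentiable on U, conformal at every z ∈ U in the sense that ⟨∂ₓX(z), ∂_yX(z)⟩ = 0 and ‖∂ₓX(z)‖ = ‖∂_yX(z)‖ = λ(z), and suppose X₁(z)² + X₂(z)² > 0 on U. Set r(z) = √(X₁(z)² + X₂(z)²). Then for every z ∈ U one has ‖∇r(z)‖² + ‖∇X₃(z)‖² ≥ λ(z)². (This is the inequality |∇_M r|² + |∇_M x₃|² ≥ 1 on a surface in ℝ³ away from the x₃-axis, expressed in a conformal parametrization.) -/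
/-- The key algebraic inequality. -/
lemma key_ineq_s6 (x1 x2 a1 a2 a3 b1 b2 b3 lam q : ℝ) (hq : 0 < q)
    (hq2 : q ^ 2 = x1 ^ 2 + x2 ^ 2)
    (h0 : a1 * b1 + a2 * b2 + a3 * b3 = 0)
    (h1 : a1 ^ 2 + a2 ^ 2 + a3 ^ 2 = lam ^ 2)
    (h2 : b1 ^ 2 + b2 ^ 2 + b3 ^ 2 = lam ^ 2) :
    ((x1 * a1 + x2 * a2) / q) ^ 2 + ((x1 * b1 + x2 * b2) / q) ^ 2 + (a3 ^ 2 + b3 ^ 2)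
      ≥ lam ^ 2 := by
  rcases eq_or_ne lam 0 with h | h
  · have ha1 : a1 = 0 := by nlinarith [sq_nonneg a1, sq_nonneg a2, sq_nonneg a3]
    have ha2 : a2 = 0 := by nlinarith [sq_nonneg a1, sq_nonneg a2, sq_nonneg a3]
    have hb1 : b1 = 0 := by nlinarith [sq_nonneg b1, sq_nonneg b2, sq_nonneg b3]
    have hb2 : b2 = 0 := by nlinarith [sq_nonneg b1, sq_nonneg b2, sq_nonneg b3]
    subst h
    simp [ha1, ha2, hb1, hb2]
    positivity
  · have hl : 0 < lam ^ 2 := by positivity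
    have hq2pos : (0:ℝ) < q ^ 2 := by positivity
    rw [ge_iff_le, ← sub_nonneg]
    have expand :
        ((x1 * a1 + x2 * a2) / q) ^ 2 + ((x1 * b1 + x2 * b2) / q) ^ 2 + (a3 ^ 2 + b3 ^ 2)
          - lam ^ 2
        = ((x1 * a1 + x2 * a2) ^ 2 + (x1 * b1 + x2 * b2) ^ 2
            + q ^ 2 * (a3 ^ 2 + b3 ^ 2) - q ^ 2 * lam ^ 2) / q ^ 2 := by
      field_simp
    rw [expand]
    apply div_nonneg _ hq2pos.le
    set A : ℝ := x2 * a1 - x1 * a2 with hA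
    set B : ℝ := x2 * b1 - x1 * b2 with hB
    set T : ℝ := x2 * (a2 * b3 - a3 * b2) - x1 * (a3 * b1 - a1 * b3) with hT
    have keyid :
        ((x1 * a1 + x2 * a2) ^ 2 + (x1 * b1 + x2 * b2) ^ 2
          + q ^ 2 * (a3 ^ 2 + b3 ^ 2) - q ^ 2 * lam ^ 2) * lam ^ 2 = T ^ 2 := by
      rw [hT, hA, hB] at *
      linear_combination (lam ^ 2 * (a3 ^ 2 + b3 ^ 2 - lam ^ 2)) * hq2
        + ((x1 ^ 2 + x2 ^ 2) * (a1 * b1 + a2 * b2 + a3 * b3)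
            - 2 * (x2 * a1 - x1 * a2) * (x2 * b1 - x1 * b2)) * h0
        + ((x2 * b1 - x1 * b2) ^ 2
            - (x1 ^ 2 + x2 ^ 2) * (b1 ^ 2 + b2 ^ 2 + b3 ^ 2 - lam ^ 2)) * h1
        + (x2 * a1 - x1 * a2) ^ 2 * h2
    have hTnn : (0:ℝ) ≤ T ^ 2 := sq_nonneg T
    nlinarith [keyid, hTnn, hl]

/-- For a `C¹` conformal map `X = (X₁, X₂, X₃) : U → ℝ³` with conformal factor `λ`,
avoiding the `x₃`-axis, and `r = √(X₁² + X₂²)`, one has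
`‖∇r‖² + ‖∇X₃‖² ≥ λ²` on `U` (the inequality `|∇_M r|² + |∇_M x₃|² ≥ 1` of Lemma 2.1). -/
theorem gradSq_r_add_gradSq_x3_ge
    (U : Set ℂ) (hU : IsOpen U) (X₁ X₂ X₃ : ℂ → ℝ)
    (hsm₁ : ContDiffOn ℝ 1 X₁ U) (hsm₂ : ContDiffOn ℝ 1 X₂ U)
    (hsm₃ : ContDiffOn ℝ 1 X₃ U)
    (lam : ℂ → ℝ)
    (hconf : ∀ z ∈ U,
      pdx X₁ z * pdy X₁ z + pdx X₂ z * pdy X₂ z + pdx X₃ z * pdy X₃ z = 0)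
    (hnormx : ∀ z ∈ U, (pdx X₁ z) ^ 2 + (pdx X₂ z) ^ 2 + (pdx X₃ z) ^ 2 = (lam z) ^ 2)
    (hnormy : ∀ z ∈ U, (pdy X₁ z) ^ 2 + (pdy X₂ z) ^ 2 + (pdy X₃ z) ^ 2 = (lam z) ^ 2)
    (hax : ∀ z ∈ U, 0 < (X₁ z) ^ 2 + (X₂ z) ^ 2)
    (r : ℂ → ℝ) (hr : ∀ z, r z = Real.sqrt ((X₁ z) ^ 2 + (X₂ z) ^ 2)) :
    ∀ z ∈ U, gradSq r z + gradSq X₃ z ≥ (lam z) ^ 2 := by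
  intro z hz
  have hzU : U ∈ nhds z := hU.mem_nhds hz
  have hd1 : DifferentiableAt ℝ X₁ z :=
    ((hsm₁.differentiableOn one_ne_zero).differentiableAt hzU)
  have hd2 : DifferentiableAt ℝ X₂ z :=
    ((hsm₂.differentiableOn one_ne_zero).differentiableAt hzU)
  have h1 : HasFDerivAt X₁ (fderiv ℝ X₁ z) z := hd1.hasFDerivAt
  have h2 : HasFDerivAt X₂ (fderiv ℝ X₂ z) z := hd2.hasFDerivAt
  set f₁ := fderiv ℝ X₁ z
  set f₂ := fderiv ℝ X₂ z
  have hF : HasFDerivAt (fun w => X₁ w ^ 2 + X₂ w ^ 2)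
      ((X₁ z • f₁ + X₁ z • f₁) + (X₂ z • f₂ + X₂ z • f₂)) z := by
    have hsq1 : HasFDerivAt (fun w => X₁ w * X₁ w) (X₁ z • f₁ + X₁ z • f₁) z := h1.mul h1
    have hsq2 : HasFDerivAt (fun w => X₂ w * X₂ w) (X₂ z • f₂ + X₂ z • f₂) z := h2.mul h2
    have := hsq1.fun_add hsq2
    simpa [pow_two] using this
  have hs : 0 < (X₁ z) ^ 2 + (X₂ z) ^ 2 := hax z hz
  have hsne : (X₁ z) ^ 2 + (X₂ z) ^ 2 ≠ 0 := ne_of_gt hs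
  have hrdf : HasFDerivAt r ((1 / (2 * Real.sqrt ((X₁ z) ^ 2 + (X₂ z) ^ 2))) •
      ((X₁ z • f₁ + X₁ z • f₁) + (X₂ z • f₂ + X₂ z • f₂))) z := by
    have : HasFDerivAt (fun w => Real.sqrt (X₁ w ^ 2 + X₂ w ^ 2))
        ((1 / (2 * Real.sqrt ((X₁ z) ^ 2 + (X₂ z) ^ 2))) •
          ((X₁ z • f₁ + X₁ z • f₁) + (X₂ z • f₂ + X₂ z • f₂))) z := hF.sqrt hsne
    have hrf : r = fun w => Real.sqrt (X₁ w ^ 2 + X₂ w ^ 2) := funext hr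
    rw [hrf]
    exact this
  set q := Real.sqrt ((X₁ z) ^ 2 + (X₂ z) ^ 2) with hqdef
  have hq : 0 < q := Real.sqrt_pos.mpr hs
  have hq2 : q ^ 2 = (X₁ z) ^ 2 + (X₂ z) ^ 2 := Real.sq_sqrt hs.le
  have hfr : fderiv ℝ r z = (1 / (2 * q)) •
      ((X₁ z • f₁ + X₁ z • f₁) + (X₂ z • f₂ + X₂ z • f₂)) := hrdf.fderiv
  have hpdxr : pdx r z = (X₁ z * pdx X₁ z + X₂ z * pdx X₂ z) / q := by
    simp only [pdx, hfr, ContinuousLinearMap.smul_apply, ContinuousLinearMap.add_apply,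
      smul_eq_mul]
    field_simp
    ring
  have hpdyr : pdy r z = (X₁ z * pdy X₁ z + X₂ z * pdy X₂ z) / q := by
    simp only [pdy, hfr, ContinuousLinearMap.smul_apply, ContinuousLinearMap.add_apply,
      smul_eq_mul]
    field_simp
    ring
  have := key_ineq_s6 (X₁ z) (X₂ z) (pdx X₁ z) (pdx X₂ z) (pdx X₃ z)
    (pdy X₁ z) (pdy X₂ z) (pdy X₃ z) (lam z) q hq hq2
    (hconf z hz) (hnormx z hz) (hnormy z hz)
  simp only [gradSq, hpdxr, hpdyr]
  linarith [this]
end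

section
/- Let U ⊆ ℂ be open. Suppose h : closure(U) → ℝ is continuous, nonnegative, has compact sublevel sets (i.e. {z ∈ closure(U) : h(z) ≤ c} is compact for every real c), and is twice continuously differentiable on U with Δh ≤ 0 on U. If f : closure(U) → ℝ is bounded, continuous, harmonic on U, and vanishes on the frontier closure(U) \ U, then f vanishes identically on closure(U). (In particular, bounded harmonic functions on U that extend continuously to closure(U) are determined by their boundary values: any two such functions agreeing on the frontier are equal.) -/
open Filter Topology

/-- Second derivative along a direction is nonpositive at a local max. -/
lemma secondDeriv_nonpos {u : ℂ → ℝ} {z : ℂ} (hu : ContDiffAt ℝ 2 u z)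
    (hmax : IsLocalMax u z) (v : ℂ) :
    fderiv ℝ (fun w => fderiv ℝ u w v) z v ≤ 0 := by
  by_contra hcon
  push_neg at hcon
  -- a ball where u is C²
  obtain ⟨s, hs_mem, hs⟩ := hu.contDiffOn (le_refl 2) (by simp)
  obtain ⟨r, hr0, hball⟩ := Metric.mem_nhds_iff.1 hs_mem
  have hs' : ContDiffOn ℝ 2 u (Metric.ball z r) := hs.mono hball
  have hdiff : ∀ w ∈ Metric.ball z r, DifferentiableAt ℝ u w := by
    intro w hw
    exact ((hs'.differentiableOn (by norm_num)).differentiableAt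
      (Metric.isOpen_ball.mem_nhds hw))
  -- ψ = directional derivative
  set ψ : ℂ → ℝ := fun w => fderiv ℝ u w v with hψdef
  have hψ : DifferentiableAt ℝ ψ z := by
    have h1 : ContDiffAt ℝ 1 (fderiv ℝ u) z := hu.fderiv_right (by norm_num)
    have h2 : ContDiffAt ℝ 1 ψ z := by
      have := (ContinuousLinearMap.apply ℝ ℝ v).contDiff.contDiffAt.comp z h1
      exact this
    exact h2.differentiableAt (by norm_num)
  -- the line
  have hline : ∀ t : ℝ, HasDerivAt (fun t : ℝ => z + t • v) v t := by
    intro t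
    simpa using ((hasDerivAt_id t).smul_const v).const_add z
  have hline0 : z + (0:ℝ) • v = z := by simp
  -- φ' has derivative c at 0
  set φ' : ℝ → ℝ := fun t => ψ (z + t • v) with hφ'def
  have hφ'deriv : HasDerivAt φ' (fderiv ℝ ψ z v) 0 := by
    have h0 : HasFDerivAt ψ (fderiv ℝ ψ z) ((fun t : ℝ => z + t • v) 0) := by
      simpa using hψ.hasFDerivAt
    exact h0.comp_hasDerivAt 0 (hline 0)
  have hφ'0 : φ' 0 = 0 := by
    have := hmax.fderiv_eq_zero
    simp [hφ'def, hψdef, hline0, this]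
  -- slope of φ' tends to a positive number
  have hslope : Filter.Tendsto (slope φ' 0) (𝓝[≠] 0) (𝓝 (fderiv ℝ ψ z v)) :=
    hasDerivAt_iff_tendsto_slope.1 hφ'deriv
  have hev1 : ∀ᶠ t in 𝓝[>] (0:ℝ), 0 < φ' t := by
    have h1 : ∀ᶠ t in 𝓝[≠] (0:ℝ), 0 < slope φ' 0 t :=
      hslope.eventually (eventually_gt_nhds hcon)
    have h2 : ∀ᶠ t in 𝓝[>] (0:ℝ), 0 < slope φ' 0 t :=
      h1.filter_mono (nhdsWithin_mono 0 (fun t ht => ne_of_gt ht))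
    filter_upwards [h2, self_mem_nhdsWithin] with t ht ht0
    have : slope φ' 0 t = φ' t / t := by
      simp [slope_def_field, hφ'0]
    rw [this] at ht
    have := mul_pos ht ht0
    rwa [div_mul_cancel₀] at this
    exact ne_of_gt ht0
  have hev2 : ∀ᶠ t in 𝓝 (0:ℝ), z + t • v ∈ Metric.ball z r := by
    have hc : Continuous (fun t : ℝ => z + t • v) := by continuity
    have : Filter.Tendsto (fun t : ℝ => z + t • v) (𝓝 0) (𝓝 z) := by
      have := hc.tendsto 0
      rwa [hline0] at this
    exact this (Metric.ball_mem_nhds z hr0)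
  have hev3 : ∀ᶠ t in 𝓝 (0:ℝ), u (z + t • v) ≤ u z := by
    have hc : Continuous (fun t : ℝ => z + t • v) := by continuity
    have ht : Filter.Tendsto (fun t : ℝ => z + t • v) (𝓝 0) (𝓝 z) := by
      have := hc.tendsto 0
      rwa [hline0] at this
    exact ht.eventually hmax
  have hev : ∀ᶠ t in 𝓝[>] (0:ℝ),
      0 < φ' t ∧ z + t • v ∈ Metric.ball z r ∧ u (z + t • v) ≤ u z :=
    hev1.and ((hev2.filter_mono nhdsWithin_le_nhds).and
      (hev3.filter_mono nhdsWithin_le_nhds))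
  obtain ⟨δ, hδ0', hδ⟩ := (mem_nhdsGT_iff_exists_Ioo_subset).1 hev
  have hδ0 : (0:ℝ) < δ := hδ0'
  set b : ℝ := δ / 2 with hbdef
  have hb0 : 0 < b := half_pos hδ0
  have hbδ : b < δ := by rw [hbdef]; linarith
  set φ : ℝ → ℝ := fun t => u (z + t • v) with hφdef
  have hmemIcc : ∀ t ∈ Set.Icc (0:ℝ) b, z + t • v ∈ Metric.ball z r := by
    intro t ht
    rcases eq_or_lt_of_le ht.1 with h0 | h0
    · rw [← h0]; simpa [hline0] using Metric.mem_ball_self (x := z) hr0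
    · exact (hδ ⟨h0, lt_of_le_of_lt ht.2 hbδ⟩).2.1
  have hφderiv : ∀ t ∈ Set.Ioo (0:ℝ) b, HasDerivAt φ (φ' t) t := by
    intro t ht
    have hd : DifferentiableAt ℝ u (z + t • v) :=
      hdiff _ (hmemIcc t ⟨le_of_lt ht.1, le_of_lt ht.2⟩)
    have h0 : HasFDerivAt u (fderiv ℝ u (z + t • v)) ((fun s : ℝ => z + s • v) t) :=
      hd.hasFDerivAt
    exact h0.comp_hasDerivAt t (hline t)
  have hlinec : Continuous (fun t : ℝ => z + t • v) :=
    continuous_const.add (continuous_id.smul continuous_const)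
  have hφcont : ContinuousOn φ (Set.Icc 0 b) := by
    apply (hs'.continuousOn.comp hlinec.continuousOn)
    intro t ht
    exact hmemIcc t ht
  have hmono : StrictMonoOn φ (Set.Icc 0 b) := by
    apply strictMonoOn_of_deriv_pos (convex_Icc 0 b) hφcont
    intro t ht
    rw [interior_Icc] at ht
    rw [(hφderiv t ht).deriv]
    exact (hδ ⟨ht.1, lt_trans ht.2 hbδ⟩).1
  have hlt : φ 0 < φ b :=
    hmono (Set.left_mem_Icc.2 (le_of_lt hb0)) (Set.right_mem_Icc.2 (le_of_lt hb0)) hb0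
  have hle : φ b ≤ φ 0 := by
    have := (hδ ⟨hb0, hbδ⟩).2.2
    simpa [hφdef, hline0] using this
  exact absurd hle (not_le.2 hlt)

/-- Directional second derivative of the perturbed function. -/
lemma dir2 {f h : ℂ → ℝ} {U : Set ℂ} (hU : IsOpen U)
    (hf : ContDiffOn ℝ 2 f U) (hh : ContDiffOn ℝ 2 h U) {z : ℂ} (hz : z ∈ U)
    (ε δ : ℝ) (v : ℂ) :
    fderiv ℝ (fun w => fderiv ℝ
        (fun x => f x - ε * h x + δ * (x.re * x.re + x.im * x.im)) w v) z v
      = fderiv ℝ (fun w => fderiv ℝ f w v) z v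
        - ε * fderiv ℝ (fun w => fderiv ℝ h w v) z v
        + δ * (2 * (v.re * v.re + v.im * v.im)) := by
  have hre : ∀ w : ℂ, HasFDerivAt (fun x : ℂ => x.re) Complex.reCLM w :=
    fun w => Complex.reCLM.hasFDerivAt
  have him : ∀ w : ℂ, HasFDerivAt (fun x : ℂ => x.im) Complex.imCLM w :=
    fun w => Complex.imCLM.hasFDerivAt
  -- first derivative of the combination, on U
  have hDf : ∀ w ∈ U, DifferentiableAt ℝ f w := fun w hw =>
    ((hf.contDiffAt (hU.mem_nhds hw)).differentiableAt (by norm_num))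
  have hDh : ∀ w ∈ U, DifferentiableAt ℝ h w := fun w hw =>
    ((hh.contDiffAt (hU.mem_nhds hw)).differentiableAt (by norm_num))
  have hq : ∀ w : ℂ, HasFDerivAt (fun x : ℂ => x.re * x.re + x.im * x.im)
      ((w.re • Complex.reCLM + w.re • Complex.reCLM)
        + (w.im • Complex.imCLM + w.im • Complex.imCLM)) w :=
    fun w => ((hre w).mul (hre w)).add ((him w).mul (him w))
  have e1 : ∀ w ∈ U,
      fderiv ℝ (fun x => f x - ε * h x + δ * (x.re * x.re + x.im * x.im)) w v
        = fderiv ℝ f w v - ε * fderiv ℝ h w v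
          + δ * (2 * (w.re * v.re + w.im * v.im)) := by
    intro w hw
    have hG : HasFDerivAt (fun x => f x - ε * h x + δ * (x.re * x.re + x.im * x.im))
        ((fderiv ℝ f w - ε • fderiv ℝ h w)
          + δ • ((w.re • Complex.reCLM + w.re • Complex.reCLM)
            + (w.im • Complex.imCLM + w.im • Complex.imCLM))) w := by
      exact ((hDf w hw).hasFDerivAt.sub ((hDh w hw).hasFDerivAt.const_smul ε)).add
        ((hq w).const_smul δ)
    rw [hG.fderiv]
    simp [Complex.reCLM, Complex.imCLM]
    ring
  -- pass to second derivative using eventual equality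
  have hUz : U ∈ 𝓝 z := hU.mem_nhds hz
  have heq : (fun w => fderiv ℝ
        (fun x => f x - ε * h x + δ * (x.re * x.re + x.im * x.im)) w v)
      =ᶠ[𝓝 z] (fun w => fderiv ℝ f w v - ε * fderiv ℝ h w v
          + δ * (2 * (w.re * v.re + w.im * v.im))) := by
    filter_upwards [hUz] with w hw
    exact e1 w hw
  rw [heq.fderiv_eq]
  -- differentiability of the directional derivatives of f and h
  have hdf : DifferentiableAt ℝ (fun w => fderiv ℝ f w v) z := by
    have h1 : ContDiffAt ℝ 1 (fderiv ℝ f) z :=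
      (hf.contDiffAt hUz).fderiv_right (by norm_num)
    exact ((ContinuousLinearMap.apply ℝ ℝ v).differentiable.differentiableAt).comp z
      (h1.differentiableAt (by norm_num))
  have hdh : DifferentiableAt ℝ (fun w => fderiv ℝ h w v) z := by
    have h1 : ContDiffAt ℝ 1 (fderiv ℝ h) z :=
      (hh.contDiffAt hUz).fderiv_right (by norm_num)
    exact ((ContinuousLinearMap.apply ℝ ℝ v).differentiable.differentiableAt).comp z
      (h1.differentiableAt (by norm_num))
  have hdq : HasFDerivAt (fun w : ℂ => fderiv ℝ f w v - ε * fderiv ℝ h w v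
      + δ * (2 * (w.re * v.re + w.im * v.im)))
      ((fderiv ℝ (fun w => fderiv ℝ f w v) z
        - ε • fderiv ℝ (fun w => fderiv ℝ h w v) z)
        + δ • ((2*v.re) • Complex.reCLM + (2*v.im) • Complex.imCLM)) z := by
    have hl : HasFDerivAt (fun w : ℂ => 2 * (w.re * v.re + w.im * v.im))
        ((2*v.re) • Complex.reCLM + (2*v.im) • Complex.imCLM) z := by
      have := (((hre z).const_mul v.re).add ((him z).const_mul v.im)).const_mul 2
      convert this using 1
      · ext w; ring
      · ext w
        simp [Complex.reCLM, Complex.imCLM]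
      · ext w
        simp [Complex.reCLM, Complex.imCLM]
      · ext w; simp only [Pi.add_apply]; ring
      · ext w
        simp [Complex.reCLM, Complex.imCLM]
        ring
    exact (hdf.hasFDerivAt.sub (hdh.hasFDerivAt.const_smul ε)).add (hl.const_smul δ)
  rw [hdq.fderiv]
  simp [Complex.reCLM, Complex.imCLM]
  ring

lemma lap_le_zero_of_isLocalMax {u : ℂ → ℝ} {z : ℂ} (hu : ContDiffAt ℝ 2 u z)
    (hmax : IsLocalMax u z) : lap u z ≤ 0 := by
  have h1 : pdx (pdx u) z ≤ 0 := secondDeriv_nonpos hu hmax 1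
  have h2 : pdy (pdy u) z ≤ 0 := secondDeriv_nonpos hu hmax Complex.I
  exact add_nonpos h1 h2

lemma pdx_eq (u : ℂ → ℝ) : pdx u = fun w => fderiv ℝ u w 1 := rfl
lemma pdy_eq (u : ℂ → ℝ) : pdy u = fun w => fderiv ℝ u w Complex.I := rfl

lemma lap_neg (u : ℂ → ℝ) (z : ℂ) : lap (fun w => -u w) z = -lap u z := by
  have e : ∀ v : ℂ, (fun w => fderiv ℝ (fun x => -u x) w v)
      = fun w => -(fderiv ℝ u w v) := by
    intro v; funext w; rw [fderiv_fun_neg]; simp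
  simp only [lap, pdx_eq, pdy_eq]
  rw [e 1, e Complex.I, fderiv_fun_neg, fderiv_fun_neg]
  simp only [ContinuousLinearMap.neg_apply]
  ring

lemma lap_comb {f h : ℂ → ℝ} {U : Set ℂ} (hU : IsOpen U)
    (hf : ContDiffOn ℝ 2 f U) (hh : ContDiffOn ℝ 2 h U) {z : ℂ} (hz : z ∈ U)
    (ε δ : ℝ) :
    lap (fun x => f x - ε * h x + δ * (x.re * x.re + x.im * x.im)) z
      = lap f z - ε * lap h z + 4 * δ := by
  have h1 := dir2 hU hf hh hz ε δ 1
  have h2 := dir2 hU hf hh hz ε δ Complex.I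
  simp only [Complex.one_re, Complex.one_im, Complex.I_re, Complex.I_im] at h1 h2
  simp only [lap, pdx_eq, pdy_eq]
  rw [h1, h2]
  ring

lemma arith_delta {m R r δv : ℝ} (hm0 : 0 < m) (hR0 : 0 ≤ R) (hr : r ≤ R)
    (hδ : δv = m / (2 * (R + 1))) : δv * r ≤ m / 2 := by
  have h2R : (0:ℝ) < 2 * (R + 1) := by linarith
  have hδ0 : 0 < δv := by rw [hδ]; exact div_pos hm0 h2R
  have hδm : δv * (2 * (R + 1)) = m := by rw [hδ]; field_simp
  nlinarith [mul_le_mul_of_nonneg_left hr hδ0.le]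

lemma key_lemma
    (U : Set ℂ) (hU : IsOpen U) (h : ℂ → ℝ)
    (hcont : ContinuousOn h (closure U))
    (hnonneg : ∀ z ∈ closure U, 0 ≤ h z)
    (hproper : ∀ c : ℝ, IsCompact {z ∈ closure U | h z ≤ c})
    (hC2 : ContDiffOn ℝ 2 h U)
    (hsuper : ∀ z ∈ U, lap h z ≤ 0)
    (f : ℂ → ℝ)
    (hfbdd : ∃ M : ℝ, ∀ z ∈ closure U, |f z| ≤ M)
    (hfcont : ContinuousOn f (closure U))
    (hfsm : ContDiffOn ℝ (⊤ : ℕ∞) f U)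
    (hfharm : ∀ z ∈ U, lap f z = 0)
    (hfbdry : ∀ z ∈ closure U \ U, f z = 0) :
    ∀ z ∈ closure U, f z ≤ 0 := by
  obtain ⟨M, hM⟩ := hfbdd
  have hf2 : ContDiffOn ℝ 2 f U := hfsm.of_le
    (by rw [show ((2:WithTop ℕ∞)) = ((2:ℕ∞) : WithTop ℕ∞) from rfl,
          WithTop.coe_le_coe]; exact le_top)
  -- main claim
  have claim : ∀ ε : ℝ, 0 < ε → ∀ z ∈ closure U, f z ≤ ε * h z := by
    intro ε hε
    by_contra hcon
    push_neg at hcon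
    obtain ⟨z1, hz1, hgz1⟩ := hcon
    have hM0 : 0 ≤ M := le_trans (abs_nonneg _) (hM z1 hz1)
    set a : ℝ := f z1 - ε * h z1 with hadef
    have ha : 0 < a := by simp [hadef]; linarith
    set c : ℝ := (M + 1) / ε with hcdef
    have hεc : ε * c = M + 1 := by
      rw [hcdef, mul_div_cancel₀ _ (ne_of_gt hε)]
    set K : Set ℂ := {z ∈ closure U | h z ≤ c} with hKdef
    have hKsub : K ⊆ closure U := fun z hz => hz.1
    have hK : IsCompact K := hproper c
    have hz1K : z1 ∈ K := by
      refine ⟨hz1, ?_⟩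
      rw [le_div_iff₀ hε]
      have h1 : f z1 ≤ M := le_trans (le_abs_self _) (hM z1 hz1)
      nlinarith [hnonneg z1 hz1]
    have hKne : K.Nonempty := ⟨z1, hz1K⟩
    clear_value a c
    -- the quadratic weight
    have hqcont : Continuous fun x : ℂ => x.re * x.re + x.im * x.im :=
      (Complex.continuous_re.mul Complex.continuous_re).add
        (Complex.continuous_im.mul Complex.continuous_im)
    have hqnn : ∀ x : ℂ, 0 ≤ x.re * x.re + x.im * x.im := fun x => by nlinarith
    obtain ⟨w0, hw0K, hw0⟩ := hK.exists_isMaxOn hKne hqcont.continuousOn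
    set R : ℝ := w0.re * w0.re + w0.im * w0.im with hRdef
    have hR0 : 0 ≤ R := hqnn w0
    have hqle : ∀ z ∈ K, z.re * z.re + z.im * z.im ≤ R := fun z hz => hw0 hz
    set m : ℝ := min 1 a with hmdef
    have hm0 : 0 < m := lt_min one_pos ha
    have hm1 : m ≤ 1 := min_le_left _ _
    have hma : m ≤ a := min_le_right _ _
    set δ : ℝ := m / (2 * (R + 1)) with hδdef
    have hδ0 : 0 < δ := div_pos hm0 (by linarith)
    have hδq : ∀ z ∈ K, δ * (z.re * z.re + z.im * z.im) ≤ m / 2 :=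
      fun z hz => arith_delta hm0 hR0 (hqle z hz) hδdef
    clear_value R m δ
    -- the perturbed function and its maximum on K
    set G : ℂ → ℝ := fun x => f x - ε * h x + δ * (x.re * x.re + x.im * x.im)
      with hGdef
    have hGval : ∀ x, G x = f x - ε * h x + δ * (x.re * x.re + x.im * x.im) :=
      fun x => rfl
    have hGcont : ContinuousOn G K :=
      ((hfcont.mono hKsub).sub (continuousOn_const.mul (hcont.mono hKsub))).add
        (continuousOn_const.mul hqcont.continuousOn)
    obtain ⟨zm, hzmK, hzm⟩ := hK.exists_isMaxOn hKne hGcont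
    have hzmval : ∀ z ∈ K, G z ≤ G zm := fun z hz => hzm hz
    have hGz1 : a ≤ G z1 := by
      rw [hGval z1, hadef]
      have h7 := mul_nonneg hδ0.le (hqnn z1)
      linarith
    have hGzm : a ≤ G zm := le_trans hGz1 (hzmval z1 hz1K)
    clear_value G
    -- zm lies in U
    have hzmU : zm ∈ U := by
      by_contra hzmU
      have hfzm : f zm = 0 := hfbdry zm ⟨hzmK.1, hzmU⟩
      have h1 : G zm ≤ δ * (zm.re * zm.re + zm.im * zm.im) := by
        rw [hGval zm, hfzm]
        have h7 := mul_nonneg hε.le (hnonneg zm hzmK.1)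
        linarith
      have h2 := hδq zm hzmK
      linarith
    -- h zm < c
    have hhzm : h zm < c := by
      rcases lt_or_eq_of_le hzmK.2 with h1 | h1
      · exact h1
      · exfalso
        have e : ε * h zm = M + 1 := by rw [h1, hεc]
        have h2 : f zm ≤ M := le_trans (le_abs_self _) (hM zm hzmK.1)
        have h3 : G zm ≤ -1 + δ * (zm.re * zm.re + zm.im * zm.im) := by
          rw [hGval zm]
          linarith
        have h4 := hδq zm hzmK
        linarith
    -- zm is a local max of G
    have hU𝓝 : U ∈ 𝓝 zm := hU.mem_nhds hzmU
    have hhca : ContinuousAt h zm := hC2.continuousOn.continuousAt hU𝓝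
    have hevK : ∀ᶠ w in 𝓝 zm, w ∈ K := by
      have hev1 : ∀ᶠ w in 𝓝 zm, h w < c := hhca (Iio_mem_nhds hhzm)
      filter_upwards [hev1, hU𝓝] with w hw1 hw2
      exact ⟨subset_closure hw2, le_of_lt hw1⟩
    have hmax : IsLocalMax G zm := by
      filter_upwards [hevK] with w hw
      exact hzmval w hw
    -- contradiction via the Laplacian
    have hGeq : G = fun x => f x - ε * h x + δ * (x.re * x.re + x.im * x.im) :=
      funext hGval
    have hGc2 : ContDiffAt ℝ 2 G zm := by
      rw [hGeq]
      have hfc : ContDiffAt ℝ 2 f zm := hf2.contDiffAt hU𝓝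
      have hhc : ContDiffAt ℝ 2 h zm := hC2.contDiffAt hU𝓝
      have hqc : ContDiffAt ℝ 2 (fun x : ℂ => x.re * x.re + x.im * x.im) zm :=
        ((Complex.reCLM.contDiff.mul Complex.reCLM.contDiff).add
          (Complex.imCLM.contDiff.mul Complex.imCLM.contDiff)).contDiffAt
      exact (hfc.sub (contDiffAt_const.mul hhc)).add (contDiffAt_const.mul hqc)
    have hlap1 : lap G zm ≤ 0 := lap_le_zero_of_isLocalMax hGc2 hmax
    have hlap2 : lap G zm = lap f zm - ε * lap h zm + 4 * δ := by
      rw [hGeq]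
      exact lap_comb hU hf2 hC2 hzmU ε δ
    have h5 := hfharm zm hzmU
    have h6 := hsuper zm hzmU
    nlinarith [mul_nonneg hε.le (neg_nonneg.2 h6)]
  -- conclude
  intro z0 hz0
  by_contra hpos
  push_neg at hpos
  have hh1 : (0:ℝ) < h z0 + 1 := by linarith [hnonneg z0 hz0]
  have hε : 0 < f z0 / (h z0 + 1) := div_pos hpos hh1
  have hcl := claim _ hε z0 hz0
  rw [div_mul_eq_mul_div, le_div_iff₀ hh1] at hcl
  nlinarith [hnonneg z0 hz0]

/-- Parabolicity criterion (Section 3 of the paper, for planar domains): if a proper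
nonnegative superharmonic function exists on `closure U`, then every bounded continuous
function on `closure U` which is harmonic on `U` and vanishes on the frontier
`closure U \ U` vanishes identically. -/
theorem parabolicity_criterion
    (U : Set ℂ) (hU : IsOpen U) (h : ℂ → ℝ)
    (hcont : ContinuousOn h (closure U))
    (hnonneg : ∀ z ∈ closure U, 0 ≤ h z)
    (hproper : ∀ c : ℝ, IsCompact {z ∈ closure U | h z ≤ c})
    (hC2 : ContDiffOn ℝ 2 h U)
    (hsuper : ∀ z ∈ U, lap h z ≤ 0)
    (f : ℂ → ℝ)
    (hfbdd : ∃ M : ℝ, ∀ z ∈ closure U, |f z| ≤ M)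
    (hfcont : ContinuousOn f (closure U))
    (hfsm : ContDiffOn ℝ (⊤ : ℕ∞) f U)
    (hfharm : ∀ z ∈ U, lap f z = 0)
    (hfbdry : ∀ z ∈ closure U \ U, f z = 0) :
    ∀ z ∈ closure U, f z = 0 := by
  intro z hz
  have h1 : f z ≤ 0 := key_lemma U hU h hcont hnonneg hproper hC2 hsuper f
    hfbdd hfcont hfsm hfharm hfbdry z hz
  have h2 : -f z ≤ 0 := by
    obtain ⟨M, hM⟩ := hfbdd
    refine key_lemma U hU h hcont hnonneg hproper hC2 hsuper (fun w => -f w)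
      ⟨M, fun w hw => by simpa using hM w hw⟩ hfcont.neg hfsm.neg
      (fun w hw => by rw [lap_neg, hfharm w hw, neg_zero])
      (fun w hw => by show -f w = 0; rw [hfbdry w hw, neg_zero]) z hz
  linarith
end

section
/- Let U ⊆ ℂ be open with compact frontier closure(U) \ U, let V be an open set containing closure(U), and let h : ℂ → ℝ be smooth on V such that h ≥ 0 on closure(U), the sublevel set {z ∈ closure(U) : h(z) ≤ c} is compact for every real c, and Δh ≤ 0 on U. Then Δh is Lebesgue-integrable on U, i.e. ∫_U |Δh| dA < ∞. -/
open MeasureTheory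

open MeasureTheory Real Set Manifold


/-- A smooth bump: positive on `(1,2)`, zero outside. -/
noncomputable def rho (s : ℝ) : ℝ := expNegInvGlue (s - 1) * expNegInvGlue (2 - s)

lemma rho_cont : Continuous rho := by
  exact ((expNegInvGlue.contDiff (n := 0)).continuous.comp (by continuity)).mul
    ((expNegInvGlue.contDiff (n := 0)).continuous.comp (by continuity))

lemma rho_nonneg (s : ℝ) : 0 ≤ rho s :=
  mul_nonneg (expNegInvGlue.nonneg _) (expNegInvGlue.nonneg _)

lemma rho_zero_left {s : ℝ} (hs : s ≤ 1) : rho s = 0 := by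
  simp [rho, expNegInvGlue.zero_of_nonpos (by linarith : s - 1 ≤ 0)]

lemma rho_zero_right {s : ℝ} (hs : 2 ≤ s) : rho s = 0 := by
  simp [rho, expNegInvGlue.zero_of_nonpos (by linarith : 2 - s ≤ 0)]

lemma rho_pos {s : ℝ} (h1 : 1 < s) (h2 : s < 2) : 0 < rho s :=
  mul_pos (expNegInvGlue.pos_of_pos (by linarith)) (expNegInvGlue.pos_of_pos (by linarith))

noncomputable def rhoC : ℝ := ∫ s in (1:ℝ)..2, rho s

lemma rhoC_pos : 0 < rhoC :=
  intervalIntegral.intervalIntegral_pos_of_pos_on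
    (rho_cont.intervalIntegrable _ _) (fun x hx => rho_pos hx.1 hx.2) one_lt_two

/-- Smooth nonincreasing cutoff: `1` on `(-∞,1]`, `0` on `[2,∞)`. -/
noncomputable def chi (t : ℝ) : ℝ := 1 - rhoC⁻¹ * ∫ s in (1:ℝ)..t, rho s

lemma chi_hasDerivAt (t : ℝ) : HasDerivAt chi (-(rhoC⁻¹ * rho t)) t := by
  have h1 : HasDerivAt (fun u => ∫ s in (1:ℝ)..u, rho s) (rho t) t :=
    intervalIntegral.integral_hasDerivAt_right (rho_cont.intervalIntegrable _ _)
      (rho_cont.stronglyMeasurableAtFilter _ _) rho_cont.continuousAt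
  exact (h1.const_mul rhoC⁻¹).const_sub 1

lemma chi_integral_eq_zero_of_le {t : ℝ} (ht : t ≤ 1) : (∫ s in (1:ℝ)..t, rho s) = 0 := by
  have : EqOn rho 0 (Set.uIcc 1 t) := by
    intro s hs
    rw [Set.uIcc_of_ge ht] at hs
    exact rho_zero_left hs.2
  rw [intervalIntegral.integral_congr this]; simp

lemma chi_of_le {t : ℝ} (ht : t ≤ 1) : chi t = 1 := by
  simp [chi, chi_integral_eq_zero_of_le ht]

lemma chi_integral_eq_of_ge {t : ℝ} (ht : 2 ≤ t) : (∫ s in (1:ℝ)..t, rho s) = rhoC := by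
  have h0 : (∫ s in (2:ℝ)..t, rho s) = 0 := by
    have : EqOn rho 0 (Set.uIcc 2 t) := by
      intro s hs
      rw [Set.uIcc_of_le ht] at hs
      exact rho_zero_right hs.1
    rw [intervalIntegral.integral_congr this]; simp
  have := intervalIntegral.integral_add_adjacent_intervals
    (rho_cont.intervalIntegrable (1:ℝ) 2 (μ := volume)) (rho_cont.intervalIntegrable (2:ℝ) t)
  rw [← this, h0, add_zero]; rfl

lemma chi_of_ge {t : ℝ} (ht : 2 ≤ t) : chi t = 0 := by
  rw [chi, chi_integral_eq_of_ge ht, inv_mul_cancel₀ rhoC_pos.ne', sub_self]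

lemma chi_mem_Icc (t : ℝ) : chi t ∈ Icc (0:ℝ) 1 := by
  rcases le_total t 1 with ht | ht
  · rw [chi_of_le ht]; exact ⟨zero_le_one, le_rfl⟩
  rcases le_total 2 t with ht2 | ht2
  · rw [chi_of_ge ht2]; exact ⟨le_rfl, zero_le_one⟩
  have h1 : (0:ℝ) ≤ ∫ s in (1:ℝ)..t, rho s :=
    intervalIntegral.integral_nonneg ht (fun x _ => rho_nonneg x)
  have h2 : (∫ s in (1:ℝ)..t, rho s) ≤ rhoC := by
    exact intervalIntegral.integral_mono_interval (μ := volume) (le_refl (1:ℝ)) ht ht2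
      (Filter.Eventually.of_forall rho_nonneg) (rho_cont.intervalIntegrable _ _)
  constructor
  · have : rhoC⁻¹ * (∫ s in (1:ℝ)..t, rho s) ≤ rhoC⁻¹ * rhoC := by
      exact mul_le_mul_of_nonneg_left h2 (inv_nonneg.2 rhoC_pos.le)
    rw [inv_mul_cancel₀ rhoC_pos.ne'] at this
    simp [chi]; linarith
  · have : 0 ≤ rhoC⁻¹ * ∫ s in (1:ℝ)..t, rho s := mul_nonneg (inv_nonneg.2 rhoC_pos.le) h1
    simp [chi]; linarith

lemma chi_contDiff : ContDiff ℝ 1 chi := by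
  rw [contDiff_one_iff_deriv]
  constructor
  · exact fun t => (chi_hasDerivAt t).differentiableAt
  · have : deriv chi = fun t => -(rhoC⁻¹ * rho t) := funext fun t => (chi_hasDerivAt t).deriv
    rw [this]
    exact (continuous_const.mul rho_cont).neg



/-- 1D: integral of the derivative of a `C¹` compactly supported function vanishes. -/
lemma integral_deriv_zero (f : ℝ → ℝ) (hf : ContDiff ℝ 1 f) (hsupp : HasCompactSupport f) :
    ∫ x, deriv f x = 0 := by
  have hint : IntegrableOn (deriv f) (Iic (0:ℝ)) volume :=
    ((hf.continuous_deriv le_rfl).integrable_of_hasCompactSupport hsupp.deriv).integrableOn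
  have hint2 : IntegrableOn (deriv f) (Ioi (0:ℝ)) volume :=
    ((hf.continuous_deriv le_rfl).integrable_of_hasCompactSupport hsupp.deriv).integrableOn
  rw [← intervalIntegral.integral_Iic_add_Ioi hint hint2, hsupp.integral_Iic_deriv_eq hf 0,
    hsupp.integral_Ioi_deriv_eq hf 0]
  ring

lemma crux_supp {F : ℂ → ℝ} (hsupp : HasCompactSupport F) (g : ℝ → ℂ) (hg : Continuous g)
    (hprop : ∀ R : ℝ, Bornology.IsBounded (g ⁻¹' (Metric.closedBall 0 R))) :
    HasCompactSupport (F ∘ g) := by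
  obtain ⟨R, hR⟩ := hsupp.isBounded.subset_closedBall 0
  have h1 : tsupport (F ∘ g) ⊆ g ⁻¹' Metric.closedBall 0 R := by
    apply closure_minimal _ (Metric.isClosed_closedBall.preimage hg)
    intro x hx
    simp only [Function.support, Function.comp, mem_setOf_eq] at hx
    exact hR (subset_tsupport F hx)
  exact Metric.isCompact_of_isClosed_isBounded (isClosed_tsupport _)
    ((hprop R).subset h1)

lemma pdx_cont_of_C1 {F : ℂ → ℝ} (hF : ContDiff ℝ 1 F) : Continuous (pdx F) :=
  (hF.continuous_fderiv one_ne_zero).clm_apply continuous_const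

lemma pdy_cont_of_C1 {F : ℂ → ℝ} (hF : ContDiff ℝ 1 F) : Continuous (pdy F) :=
  (hF.continuous_fderiv one_ne_zero).clm_apply continuous_const

lemma pdx_supp {F : ℂ → ℝ} (hs : HasCompactSupport F) : HasCompactSupport (pdx F) :=
  (hs.fderiv ℝ).comp_left (g := fun L : ℂ →L[ℝ] ℝ => L 1) rfl

lemma pdy_supp {F : ℂ → ℝ} (hs : HasCompactSupport F) : HasCompactSupport (pdy F) :=
  (hs.fderiv ℝ).comp_left (g := fun L : ℂ →L[ℝ] ℝ => L Complex.I) rfl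

lemma re_add_im_prop (y : ℝ) : ∀ R : ℝ,
    Bornology.IsBounded ((fun x : ℝ => (x : ℂ) + y * Complex.I) ⁻¹' (Metric.closedBall 0 R)) := by
  intro R
  apply (Metric.isBounded_closedBall (x := (0:ℝ)) (r := R)).subset
  intro x hx
  simp only [mem_preimage, Metric.mem_closedBall, dist_zero_right] at hx ⊢
  calc ‖x‖ = |((x : ℂ) + y * Complex.I).re| := by
        simp [Complex.add_re, Real.norm_eq_abs]
    _ ≤ ‖(x : ℂ) + y * Complex.I‖ := Complex.abs_re_le_norm _
    _ ≤ R := hx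

lemma im_add_re_prop (x : ℝ) : ∀ R : ℝ,
    Bornology.IsBounded ((fun y : ℝ => (x : ℂ) + y * Complex.I) ⁻¹' (Metric.closedBall 0 R)) := by
  intro R
  apply (Metric.isBounded_closedBall (x := (0:ℝ)) (r := R)).subset
  intro y hy
  simp only [mem_preimage, Metric.mem_closedBall, dist_zero_right] at hy ⊢
  calc ‖y‖ = |((x : ℂ) + y * Complex.I).im| := by
        simp [Complex.add_im, Real.norm_eq_abs]
    _ ≤ ‖(x : ℂ) + y * Complex.I‖ := Complex.abs_im_le_norm _
    _ ≤ R := hy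

lemma ofReal_add_mul_I_contDiff (y : ℝ) : ContDiff ℝ 1 (fun x : ℝ => (x : ℂ) + y * Complex.I) :=
  Complex.ofRealCLM.contDiff.add contDiff_const

lemma hasDerivAt_slice_x {F : ℂ → ℝ} (hF : ContDiff ℝ 1 F) (y x : ℝ) :
    HasDerivAt (fun x : ℝ => F ((x : ℂ) + y * Complex.I)) (pdx F ((x : ℂ) + y * Complex.I)) x := by
  have hg : HasDerivAt (fun x : ℝ => (x : ℂ) + y * Complex.I) 1 x := by
    simpa using (Complex.ofRealCLM.hasDerivAt (x := x)).add_const (y * Complex.I)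
  have hFz := (hF.differentiable one_ne_zero ((x : ℂ) + y * Complex.I)).hasFDerivAt
  exact (hFz.comp_hasDerivAt x hg)

lemma hasDerivAt_slice_y {F : ℂ → ℝ} (hF : ContDiff ℝ 1 F) (x y : ℝ) :
    HasDerivAt (fun y : ℝ => F ((x : ℂ) + y * Complex.I)) (pdy F ((x : ℂ) + y * Complex.I)) y := by
  have hg : HasDerivAt (fun y : ℝ => (x : ℂ) + y * Complex.I) Complex.I y := by
    have h1 : HasDerivAt (fun y : ℝ => (y : ℂ)) 1 y := Complex.ofRealCLM.hasDerivAt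
    simpa using ((h1.mul_const Complex.I).const_add (x : ℂ))
  have hFz := (hF.differentiable one_ne_zero ((x : ℂ) + y * Complex.I)).hasFDerivAt
  exact (hFz.comp_hasDerivAt y hg)

lemma slice_contDiff_y (y : ℝ) {F : ℂ → ℝ} (hF : ContDiff ℝ 1 F) :
    ContDiff ℝ 1 (fun x : ℝ => F ((x : ℂ) + y * Complex.I)) :=
  hF.comp (ofReal_add_mul_I_contDiff y)

lemma slice_contDiff_x (x : ℝ) {F : ℂ → ℝ} (hF : ContDiff ℝ 1 F) :
    ContDiff ℝ 1 (fun y : ℝ => F ((x : ℂ) + y * Complex.I)) :=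
  hF.comp (contDiff_const.add ((Complex.ofRealCLM.contDiff).mul contDiff_const))

/-- Integral of `∂F/∂x` over `ℂ` vanishes for `C¹` compactly supported `F`. -/
lemma integral_pdx_zero (F : ℂ → ℝ) (hF : ContDiff ℝ 1 F) (hs : HasCompactSupport F) :
    ∫ z, pdx F z = 0 := by
  have hmp : MeasurePreserving (Complex.measurableEquivRealProd.symm) :=
    Complex.volume_preserving_equiv_real_prod.symm _
  have hcont : Continuous fun p : ℝ × ℝ => (p.1 : ℂ) + p.2 * Complex.I := by continuity
  have key : ∫ z, pdx F z = ∫ p : ℝ × ℝ, pdx F ((p.1 : ℂ) + p.2 * Complex.I) := by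
    rw [← hmp.integral_comp Complex.measurableEquivRealProd.symm.measurableEmbedding (pdx F)]
    congr 1; ext p; congr 1
    simp [Complex.measurableEquivRealProd_symm_apply, Complex.ext_iff]
  rw [key]
  have hint : Integrable (fun p : ℝ × ℝ => pdx F ((p.1 : ℂ) + p.2 * Complex.I))
      ((volume : Measure ℝ).prod (volume : Measure ℝ)) := by
    rw [← MeasureTheory.Measure.volume_eq_prod]
    apply ((pdx_cont_of_C1 hF).comp hcont).integrable_of_hasCompactSupport
    obtain ⟨R, hR⟩ := (pdx_supp hs).isBounded.subset_closedBall 0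
    have h1 : tsupport ((pdx F) ∘ fun p : ℝ × ℝ => (p.1 : ℂ) + p.2 * Complex.I) ⊆
        (fun p : ℝ × ℝ => (p.1 : ℂ) + p.2 * Complex.I) ⁻¹' Metric.closedBall 0 R := by
      apply closure_minimal _ (Metric.isClosed_closedBall.preimage hcont)
      intro p hp
      exact hR (subset_tsupport (pdx F) hp)
    apply HasCompactSupport.intro (K := (Metric.closedBall (0:ℝ) R) ×ˢ (Metric.closedBall (0:ℝ) R))
      ((isCompact_closedBall (0:ℝ) R).prod (isCompact_closedBall (0:ℝ) R))
    intro p hp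
    by_contra hne
    apply hp
    have := h1 (subset_tsupport _ hne)
    simp only [mem_preimage, Metric.mem_closedBall, dist_zero_right] at this
    constructor <;> simp only [Metric.mem_closedBall, dist_zero_right]
    · calc ‖p.1‖ = |((p.1 : ℂ) + p.2 * Complex.I).re| := by simp [Real.norm_eq_abs]
        _ ≤ ‖_‖ := Complex.abs_re_le_norm _
        _ ≤ R := this
    · calc ‖p.2‖ = |((p.1 : ℂ) + p.2 * Complex.I).im| := by simp [Real.norm_eq_abs]
        _ ≤ ‖_‖ := Complex.abs_im_le_norm _
        _ ≤ R := this
  rw [MeasureTheory.Measure.volume_eq_prod, MeasureTheory.integral_prod_symm _ hint]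
  have inner : ∀ y : ℝ, (∫ x : ℝ, pdx F ((x : ℂ) + y * Complex.I)) = 0 := by
    intro y
    have hfy : ContDiff ℝ 1 (fun x : ℝ => F ((x : ℂ) + y * Complex.I)) := slice_contDiff_y y hF
    have hsy : HasCompactSupport (fun x : ℝ => F ((x : ℂ) + y * Complex.I)) :=
      crux_supp hs _ (ofReal_add_mul_I_contDiff y).continuous (re_add_im_prop y)
    have := integral_deriv_zero _ hfy hsy
    rw [← this]
    congr 1; ext x
    exact ((hasDerivAt_slice_x hF y x).deriv).symm
  simp [inner]

/-- Integral of `∂F/∂y` over `ℂ` vanishes for `C¹` compactly supported `F`. -/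
lemma integral_pdy_zero (F : ℂ → ℝ) (hF : ContDiff ℝ 1 F) (hs : HasCompactSupport F) :
    ∫ z, pdy F z = 0 := by
  have hmp : MeasurePreserving (Complex.measurableEquivRealProd.symm) :=
    Complex.volume_preserving_equiv_real_prod.symm _
  have hcont : Continuous fun p : ℝ × ℝ => (p.1 : ℂ) + p.2 * Complex.I := by continuity
  have key : ∫ z, pdy F z = ∫ p : ℝ × ℝ, pdy F ((p.1 : ℂ) + p.2 * Complex.I) := by
    rw [← hmp.integral_comp Complex.measurableEquivRealProd.symm.measurableEmbedding (pdy F)]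
    congr 1; ext p; congr 1
    simp [Complex.measurableEquivRealProd_symm_apply, Complex.ext_iff]
  rw [key]
  have hint : Integrable (fun p : ℝ × ℝ => pdy F ((p.1 : ℂ) + p.2 * Complex.I))
      ((volume : Measure ℝ).prod (volume : Measure ℝ)) := by
    rw [← MeasureTheory.Measure.volume_eq_prod]
    apply ((pdy_cont_of_C1 hF).comp hcont).integrable_of_hasCompactSupport
    obtain ⟨R, hR⟩ := (pdy_supp hs).isBounded.subset_closedBall 0
    have h1 : tsupport ((pdy F) ∘ fun p : ℝ × ℝ => (p.1 : ℂ) + p.2 * Complex.I) ⊆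
        (fun p : ℝ × ℝ => (p.1 : ℂ) + p.2 * Complex.I) ⁻¹' Metric.closedBall 0 R := by
      apply closure_minimal _ (Metric.isClosed_closedBall.preimage hcont)
      intro p hp
      exact hR (subset_tsupport (pdy F) hp)
    apply HasCompactSupport.intro (K := (Metric.closedBall (0:ℝ) R) ×ˢ (Metric.closedBall (0:ℝ) R))
      ((isCompact_closedBall (0:ℝ) R).prod (isCompact_closedBall (0:ℝ) R))
    intro p hp
    by_contra hne
    apply hp
    have := h1 (subset_tsupport _ hne)
    simp only [mem_preimage, Metric.mem_closedBall, dist_zero_right] at this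
    constructor <;> simp only [Metric.mem_closedBall, dist_zero_right]
    · calc ‖p.1‖ = |((p.1 : ℂ) + p.2 * Complex.I).re| := by simp [Real.norm_eq_abs]
        _ ≤ ‖_‖ := Complex.abs_re_le_norm _
        _ ≤ R := this
    · calc ‖p.2‖ = |((p.1 : ℂ) + p.2 * Complex.I).im| := by simp [Real.norm_eq_abs]
        _ ≤ ‖_‖ := Complex.abs_im_le_norm _
        _ ≤ R := this
  rw [MeasureTheory.Measure.volume_eq_prod, MeasureTheory.integral_prod _ hint]
  have inner : ∀ x : ℝ, (∫ y : ℝ, pdy F ((x : ℂ) + y * Complex.I)) = 0 := by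
    intro x
    have hfx : ContDiff ℝ 1 (fun y : ℝ => F ((x : ℂ) + y * Complex.I)) := slice_contDiff_x x hF
    have hsx : HasCompactSupport (fun y : ℝ => F ((x : ℂ) + y * Complex.I)) := by
      apply crux_supp hs _ _ (im_add_re_prop x)
      exact (contDiff_const.add ((Complex.ofRealCLM.contDiff (n := 1)).mul
        contDiff_const)).continuous
    have := integral_deriv_zero _ hfx hsx
    rw [← this]
    congr 1; ext y
    exact ((hasDerivAt_slice_y hF x y).deriv).symm
  simp [inner]

/-- Divergence theorem for compactly supported `C¹` vector fields on `ℂ`. -/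
lemma integral_div_zero (F₁ F₂ : ℂ → ℝ) (h1 : ContDiff ℝ 1 F₁) (h2 : ContDiff ℝ 1 F₂)
    (hs1 : HasCompactSupport F₁) (hs2 : HasCompactSupport F₂) :
    ∫ z, (pdx F₁ z + pdy F₂ z) = 0 := by
  rw [integral_add
    ((pdx_cont_of_C1 h1).integrable_of_hasCompactSupport (pdx_supp hs1))
    ((pdy_cont_of_C1 h2).integrable_of_hasCompactSupport (pdy_supp hs2)),
    integral_pdx_zero F₁ h1 hs1, integral_pdy_zero F₂ h2 hs2, add_zero]


lemma pd_contDiffOn {W : Set ℂ} (hW : IsOpen W) {u : ℂ → ℝ}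
    (hu : ContDiffOn ℝ (⊤ : ℕ∞) u W) (v : ℂ) :
    ContDiffOn ℝ (⊤ : ℕ∞) (fun z => fderiv ℝ u z v) W := by
  have h1 : ContDiffOn ℝ (⊤ : ℕ∞) (fderiv ℝ u) W := hu.fderiv_of_isOpen hW (by exact_mod_cast le_top)
  exact (ContinuousLinearMap.apply ℝ ℝ v).contDiff.comp_contDiffOn h1

lemma pdx_contDiffOn {W : Set ℂ} (hW : IsOpen W) {u : ℂ → ℝ}
    (hu : ContDiffOn ℝ (⊤ : ℕ∞) u W) : ContDiffOn ℝ (⊤ : ℕ∞) (pdx u) W :=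
  pd_contDiffOn hW hu 1

lemma pdy_contDiffOn {W : Set ℂ} (hW : IsOpen W) {u : ℂ → ℝ}
    (hu : ContDiffOn ℝ (⊤ : ℕ∞) u W) : ContDiffOn ℝ (⊤ : ℕ∞) (pdy u) W :=
  pd_contDiffOn hW hu Complex.I

lemma lap_contDiffOn {W : Set ℂ} (hW : IsOpen W) {u : ℂ → ℝ}
    (hu : ContDiffOn ℝ (⊤ : ℕ∞) u W) : ContDiffOn ℝ (⊤ : ℕ∞) (lap u) W :=
  (pdx_contDiffOn hW (pdx_contDiffOn hW hu)).add (pdy_contDiffOn hW (pdy_contDiffOn hW hu))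

lemma lap_measurable (u : ℂ → ℝ) : Measurable (lap u) :=
  ((measurable_fderiv_apply_const ℝ (pdx u) 1).add
    (measurable_fderiv_apply_const ℝ (pdy u) Complex.I))

/-- Planar version of the claim in Lemma 2.1 of the paper: a proper nonnegative
superharmonic function `h` on a domain `U` with compact frontier (smooth on a
neighborhood `V` of `closure U`) has `Δh ∈ L¹(U)`. -/
theorem laplacian_superharmonic_integrable
    (U : Set ℂ) (hU : IsOpen U) (hfr : IsCompact (closure U \ U))
    (V : Set ℂ) (hV : IsOpen V) (hUV : closure U ⊆ V)
    (h : ℂ → ℝ) (hsm : ContDiffOn ℝ (⊤ : ℕ∞) h V)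
    (hnonneg : ∀ z ∈ closure U, 0 ≤ h z)
    (hproper : ∀ c : ℝ, IsCompact {z ∈ closure U | h z ≤ c})
    (hsuper : ∀ z ∈ U, lap h z ≤ 0) :
    IntegrableOn (fun z => lap h z) U volume := by
  classical
  set Fr : Set ℂ := closure U \ U with hFr
  -- the cutoff θ
  set K₁ : Set ℂ := Metric.cthickening 1 Fr with hK₁
  have hK₁c : IsCompact K₁ := hfr.cthickening
  set A : Set ℂ := Uᶜ ∪ K₁ with hA
  have hAc : IsClosed A := hU.isClosed_compl.union hK₁c.isClosed
  set B : Set ℂ := U \ Metric.thickening 2 Fr with hB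
  have hBU : B ⊆ U := diff_subset
  have hBc : IsClosed B := by
    have h1 : closure B ⊆ closure U := closure_mono diff_subset
    have h2 : closure B ⊆ (Metric.thickening 2 Fr)ᶜ :=
      closure_minimal (fun z hz => hz.2) Metric.isOpen_thickening.isClosed_compl
    rw [← closure_subset_iff_isClosed]
    intro z hz
    have hzU : z ∈ U := by
      by_contra hzU
      exact (h2 hz) (Metric.self_subset_thickening two_pos Fr ⟨h1 hz, hzU⟩)
    exact ⟨hzU, h2 hz⟩
  have hdisj : Disjoint A B := by
    rw [disjoint_union_left]
    constructor
    · exact disjoint_compl_left_iff_subset.mpr hBU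
    · refine Set.disjoint_left.mpr fun z hz1 hz2 => hz2.2 ?_
      exact Metric.cthickening_subset_thickening' two_pos one_lt_two Fr hz1
  obtain ⟨θ₀, hθ0, hθ1, hθicc⟩ :=
    exists_contMDiffMap_zero_one_nhds_of_isClosed (𝓘(ℝ, ℂ)) (n := (⊤ : ℕ∞)) hAc hBc hdisj
  set θ : ℂ → ℝ := ⇑θ₀ with hθdef
  have hθsm : ContDiff ℝ (⊤ : ℕ∞) θ := contMDiff_iff_contDiff.mp θ₀.contMDiff
  have hθ0' : ∀ z ∈ A, ∀ᶠ w in nhds z, θ w = 0 := by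
    intro z hz
    exact (eventually_nhdsSet_iff_forall.mp hθ0) z hz
  have hθ1' : ∀ z ∈ B, ∀ᶠ w in nhds z, θ w = 1 := by
    intro z hz
    exact (eventually_nhdsSet_iff_forall.mp hθ1) z hz
  have hθA : ∀ z ∈ A, θ z = 0 := fun z hz => (hθ0' z hz).self_of_nhds
  have hθB : ∀ z ∈ B, θ z = 1 := fun z hz => (hθ1' z hz).self_of_nhds
  -- the compact transition zone
  set K₂ : Set ℂ := Metric.cthickening 2 Fr ∩ closure U with hK₂
  have hK₂c : IsCompact K₂ := hfr.cthickening.inter_right isClosed_closure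
  have hUBK₂ : U ⊆ B ∪ K₂ := by
    intro z hz
    by_cases hz2 : z ∈ Metric.thickening 2 Fr
    · exact Or.inr ⟨Metric.thickening_subset_cthickening 2 Fr hz2, subset_closure hz⟩
    · exact Or.inl ⟨hz, hz2⟩
  have hgradθ : ∀ z ∈ U \ K₂, fderiv ℝ θ z = 0 ∧ θ z = 1 := by
    intro z hz
    have hzB : z ∈ B := by
      refine ⟨hz.1, fun hc => hz.2 ?_⟩
      exact ⟨Metric.thickening_subset_cthickening 2 Fr hc, subset_closure hz.1⟩
    have hev := hθ1' z hzB
    constructor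
    · have : θ =ᶠ[nhds z] (fun _ => (1:ℝ)) := hev
      rw [this.fderiv_eq]
      exact fderiv_const_apply 1
    · exact hθB z hzB
  -- bound for the cross term
  set g : ℂ → ℝ := fun z => pdx θ z * pdx h z + pdy θ z * pdy h z with hg
  have hθfc : Continuous (fderiv ℝ θ) := hθsm.continuous_fderiv (by simp)
  have hpdxθc : Continuous (pdx θ) := hθfc.clm_apply continuous_const
  have hpdyθc : Continuous (pdy θ) := hθfc.clm_apply continuous_const
  have hgcontOn : ContinuousOn g V :=
    ((hpdxθc.continuousOn.mul (pdx_contDiffOn hV hsm).continuousOn).add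
      (hpdyθc.continuousOn.mul (pdy_contDiffOn hV hsm).continuousOn))
  obtain ⟨M, hM⟩ := hK₂c.exists_bound_of_continuousOn (hgcontOn.mono (hK₂.symm ▸
    (inter_subset_right.trans hUV) : K₂ ⊆ V))
  set M' : ℝ := max M 0 with hM'
  have hM'0 : 0 ≤ M' := le_max_right _ _
  set C : ℝ := M' * (volume K₂).toReal with hC
  set E : ℕ → Set ℂ := fun n => B ∩ {z ∈ closure U | h z ≤ (n:ℝ)+1} with hE
  have hEcomp : ∀ n, IsCompact (E n) := fun n => (hproper ((n:ℝ)+1)).inter_left hBc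
  have hlapV : ContinuousOn (lap h) V := (lap_contDiffOn hV hsm).continuousOn
  have bnd : ∀ n : ℕ, (∫ z in E n, (-(lap h z))) ≤ C := by
    intro n
    set T : ℝ := (n:ℝ) + 1 with hT
    have hn0 : (0:ℝ) ≤ (n:ℝ) := Nat.cast_nonneg n
    have hT1 : (1:ℝ) ≤ T := by rw [hT]; linarith
    have hT0 : (0:ℝ) < T := by linarith
    set χh : ℂ → ℝ := fun z => chi (h z / T) with hχh
    set φ : ℂ → ℝ := fun z => θ z * χh z with hφdef
    set G₁ : ℂ → ℝ := fun z => φ z * pdx h z with hG₁def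
    set G₂ : ℂ → ℝ := fun z => φ z * pdy h z with hG₂def
    have hzUV : ∀ z ∈ U, z ∈ V := fun z hz => hUV (subset_closure hz)
    have hθev0 : ∀ z ∉ U, ∀ᶠ w in nhds z, θ w = 0 := fun z hz => hθ0' z (Or.inl hz)
    have hφev0 : ∀ z ∉ U, ∀ᶠ w in nhds z, φ w = 0 := fun z hz =>
      (hθev0 z hz).mono (fun w hw => by simp [hφdef, hw])
    have hhCA : ∀ z ∈ U, ContDiffAt ℝ 1 h z := fun z hz =>
      (hsm.contDiffAt (hV.mem_nhds (hzUV z hz))).of_le (by exact_mod_cast le_top)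
    have hpdxhCA : ∀ z ∈ U, ContDiffAt ℝ 1 (pdx h) z := fun z hz =>
      ((pdx_contDiffOn hV hsm).contDiffAt (hV.mem_nhds (hzUV z hz))).of_le (by exact_mod_cast le_top)
    have hpdyhCA : ∀ z ∈ U, ContDiffAt ℝ 1 (pdy h) z := fun z hz =>
      ((pdy_contDiffOn hV hsm).contDiffAt (hV.mem_nhds (hzUV z hz))).of_le (by exact_mod_cast le_top)
    have hφC1 : ContDiff ℝ 1 φ := by
      rw [contDiff_iff_contDiffAt]
      intro z
      by_cases hz : z ∈ U
      · exact (hθsm.contDiffAt.of_le (by exact_mod_cast le_top)).mul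
          ((chi_contDiff.contDiffAt).comp z ((hhCA z hz).div_const T))
      · exact (contDiffAt_const (c := (0:ℝ))).congr_of_eventuallyEq (hφev0 z hz)
    have hG₁C1 : ContDiff ℝ 1 G₁ := by
      rw [contDiff_iff_contDiffAt]
      intro z
      by_cases hz : z ∈ U
      · exact (hφC1.contDiffAt).mul (hpdxhCA z hz)
      · exact (contDiffAt_const (c := (0:ℝ))).congr_of_eventuallyEq
          ((hφev0 z hz).mono (fun w hw => by simp [hG₁def, hw]))
    have hG₂C1 : ContDiff ℝ 1 G₂ := by
      rw [contDiff_iff_contDiffAt]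
      intro z
      by_cases hz : z ∈ U
      · exact (hφC1.contDiffAt).mul (hpdyhCA z hz)
      · exact (contDiffAt_const (c := (0:ℝ))).congr_of_eventuallyEq
          ((hφev0 z hz).mono (fun w hw => by simp [hG₂def, hw]))
    have hSc : IsCompact {z ∈ closure U | h z ≤ 2*T} := hproper (2*T)
    have hφS : ∀ z, z ∉ {z ∈ closure U | h z ≤ 2*T} → φ z = 0 := by
      intro z hz
      by_contra hne
      have hθne : θ z ≠ 0 := fun h0 => hne (by simp [hφdef, h0])
      have hχne : χh z ≠ 0 := fun h0 => hne (by simp [hφdef, h0])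
      have hzU : z ∈ U := by
        by_contra hzU
        exact hθne (hθA z (Or.inl hzU))
      have hh2T : h z ≤ 2*T := by
        by_contra hgt
        refine hχne ?_
        show chi (h z / T) = 0
        apply chi_of_ge
        rw [le_div_iff₀ hT0]
        linarith
      exact hz ⟨subset_closure hzU, hh2T⟩
    have hG₁supp : HasCompactSupport G₁ :=
      HasCompactSupport.intro hSc (fun z hz => by simp [hG₁def, hφS z hz])
    have hG₂supp : HasCompactSupport G₂ :=
      HasCompactSupport.intro hSc (fun z hz => by simp [hG₂def, hφS z hz])
    set P : ℂ → ℝ := U.indicator (fun z => φ z * (-(lap h z))) with hPdef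
    set Dv : ℂ → ℝ := fun z => pdx G₁ z + pdy G₂ z with hDvdef
    have hIBP : ∫ z, Dv z = 0 := integral_div_zero G₁ G₂ hG₁C1 hG₂C1 hG₁supp hG₂supp
    set Q : ℂ → ℝ := fun z => Dv z + P z with hQdef
    have hkey : ∀ z ∈ U, Q z = χh z * g z
        + θ z * ((-(rhoC⁻¹ * rho (h z / T))) * T⁻¹) * ((pdx h z)^2 + (pdy h z)^2) := by
      intro z hz
      have hhd : HasFDerivAt h (fderiv ℝ h z) z :=
        ((hhCA z hz).differentiableAt one_ne_zero).hasFDerivAt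
      have hθd : HasFDerivAt θ (fderiv ℝ θ z) z :=
        ((hθsm.differentiable (by simp)) z).hasFDerivAt
      have hp1d : HasFDerivAt (pdx h) (fderiv ℝ (pdx h) z) z :=
        ((hpdxhCA z hz).differentiableAt one_ne_zero).hasFDerivAt
      have hp2d : HasFDerivAt (pdy h) (fderiv ℝ (pdy h) z) z :=
        ((hpdyhCA z hz).differentiableAt one_ne_zero).hasFDerivAt
      have hdivT : HasFDerivAt (fun w => h w / T) (T⁻¹ • fderiv ℝ h z) z := by
        simpa [div_eq_inv_mul, smul_smul] using hhd.const_mul T⁻¹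
      have hχd : HasFDerivAt χh
          ((-(rhoC⁻¹ * rho (h z / T))) • (T⁻¹ • fderiv ℝ h z)) z :=
        HasDerivAt.comp_hasFDerivAt (h₂ := chi) z (chi_hasDerivAt (h z / T)) hdivT
      have hφd : HasFDerivAt φ
          (θ z • ((-(rhoC⁻¹ * rho (h z / T))) • (T⁻¹ • fderiv ℝ h z))
            + χh z • fderiv ℝ θ z) z := hθd.mul hχd
      have hG₁d : HasFDerivAt G₁ _ z := hφd.mul hp1d
      have hG₂d : HasFDerivAt G₂ _ z := hφd.mul hp2d
      have e1 : pdx G₁ z = φ z * pdx (pdx h) z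
          + pdx h z * (θ z * ((-(rhoC⁻¹ * rho (h z / T))) * (T⁻¹ * pdx h z))
            + χh z * pdx θ z) := by
        show fderiv ℝ G₁ z 1 = _
        rw [hG₁d.fderiv]
        simp [pdx, smul_eq_mul]
        ring
      have e2 : pdy G₂ z = φ z * pdy (pdy h) z
          + pdy h z * (θ z * ((-(rhoC⁻¹ * rho (h z / T))) * (T⁻¹ * pdy h z))
            + χh z * pdy θ z) := by
        show fderiv ℝ G₂ z Complex.I = _
        rw [hG₂d.fderiv]
        simp [pdy, smul_eq_mul]
        ring
      have eP : P z = φ z * (-(lap h z)) := indicator_of_mem hz _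
      rw [hQdef]
      show Dv z + P z = _
      rw [hDvdef]
      show pdx G₁ z + pdy G₂ z + P z = _
      rw [e1, e2, eP, hg]
      show _ = χh z * (pdx θ z * pdx h z + pdy θ z * pdy h z) + _
      simp only [lap, hφdef]
      ring
    have hDv0 : ∀ z ∉ U, Dv z = 0 := by
      intro z hz
      have h1 : G₁ =ᶠ[nhds z] (fun _ => (0:ℝ)) :=
        (hφev0 z hz).mono (fun w hw => by simp [hG₁def, hw])
      have h2 : G₂ =ᶠ[nhds z] (fun _ => (0:ℝ)) :=
        (hφev0 z hz).mono (fun w hw => by simp [hG₂def, hw])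
      rw [hDvdef]
      show pdx G₁ z + pdy G₂ z = 0
      rw [pdx, pdy, h1.fderiv_eq, h2.fderiv_eq]
      simp
    have hχ01 : ∀ z, χh z ∈ Icc (0:ℝ) 1 := fun z => chi_mem_Icc _
    have hQb : ∀ z, Q z ≤ K₂.indicator (fun _ => M') z := by
      intro z
      by_cases hz : z ∈ U
      · rw [hkey z hz]
        have hc' : (-(rhoC⁻¹ * rho (h z / T))) * T⁻¹ ≤ 0 :=
          mul_nonpos_of_nonpos_of_nonneg
            (neg_nonpos.mpr (mul_nonneg (inv_nonneg.2 rhoC_pos.le) (rho_nonneg _)))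
            (inv_nonneg.2 hT0.le)
        have hsq : (0:ℝ) ≤ (pdx h z)^2 + (pdy h z)^2 := by positivity
        have hsecond : θ z * ((-(rhoC⁻¹ * rho (h z / T))) * T⁻¹)
            * ((pdx h z)^2 + (pdy h z)^2) ≤ 0 :=
          mul_nonpos_of_nonpos_of_nonneg
            (mul_nonpos_of_nonneg_of_nonpos (hθicc z).1 hc') hsq
        by_cases hzK : z ∈ K₂
        · rw [indicator_of_mem hzK]
          have h1 : χh z * g z ≤ |g z| := by
            calc χh z * g z ≤ |χh z * g z| := le_abs_self _
              _ = |χh z| * |g z| := abs_mul _ _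
              _ ≤ 1 * |g z| := by
                  apply mul_le_mul_of_nonneg_right _ (abs_nonneg _)
                  rw [abs_of_nonneg (hχ01 z).1]
                  exact (hχ01 z).2
              _ = |g z| := one_mul _
          have h2 : |g z| ≤ M := by
            have := hM z hzK
            rwa [Real.norm_eq_abs] at this
          have h3 : |g z| ≤ M' := h2.trans (le_max_left _ _)
          have h4 := add_le_add h1 hsecond
          rw [add_zero] at h4
          exact h4.trans h3
        · have hg0 : g z = 0 := by
            obtain ⟨hf0, -⟩ := hgradθ z ⟨hz, hzK⟩
            rw [hg]
            show pdx θ z * pdx h z + pdy θ z * pdy h z = 0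
            rw [pdx, pdy, hf0]
            simp
          rw [indicator_of_notMem hzK, hg0, mul_zero, zero_add]
          exact hsecond
      · have hP0 : P z = 0 := indicator_of_notMem hz _
        have : Q z = 0 := by rw [hQdef]; show Dv z + P z = 0; rw [hDv0 z hz, hP0, add_zero]
        rw [this]
        exact Set.indicator_nonneg (fun _ _ => hM'0) z
    have hDvcont : Continuous Dv := by
      rw [hDvdef]
      exact (pdx_cont_of_C1 hG₁C1).add (pdy_cont_of_C1 hG₂C1)
    have hDvsupp : HasCompactSupport Dv := (pdx_supp hG₁supp).add (pdy_supp hG₂supp)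
    have hDvint : Integrable Dv := hDvcont.integrable_of_hasCompactSupport hDvsupp
    have hPcont : Continuous P := by
      rw [continuous_iff_continuousAt]
      intro z
      by_cases hz : z ∈ U
      · have hev : (fun w => φ w * (-(lap h w))) =ᶠ[nhds z] P := by
          filter_upwards [hU.mem_nhds hz] with w hw
          simp [hPdef, indicator_of_mem hw]
        apply ContinuousAt.congr _ hev
        exact (hφC1.continuous.continuousAt).mul
          ((hlapV.continuousAt (hV.mem_nhds (hzUV z hz))).neg)
      · have hev : (fun _ => (0:ℝ)) =ᶠ[nhds z] P := by
          refine (hφev0 z hz).mono (fun w hw => ?_)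
          by_cases hwU : w ∈ U
          · simp [hPdef, indicator_of_mem hwU, hw]
          · simp [hPdef, indicator_of_notMem hwU]
        exact ContinuousAt.congr continuousAt_const hev
    have hPsupp : HasCompactSupport P := by
      apply HasCompactSupport.intro hSc
      intro z hz
      by_cases hzU : z ∈ U
      · simp [hPdef, indicator_of_mem hzU, hφS z hz]
      · simp [hPdef, indicator_of_notMem hzU]
    have hPint : Integrable P := hPcont.integrable_of_hasCompactSupport hPsupp
    have hQint : Integrable Q := hDvint.add hPint
    have hIndint : Integrable (K₂.indicator fun _ => M') := by
      rw [integrable_indicator_iff hK₂c.measurableSet]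
      exact integrableOn_const hK₂c.measure_lt_top.ne
    have hQC : ∫ z, Q z ≤ C := by
      calc ∫ z, Q z ≤ ∫ z, K₂.indicator (fun _ => M') z := integral_mono hQint hIndint hQb
        _ = C := by
            rw [integral_indicator_const _ hK₂c.measurableSet, hC, smul_eq_mul, mul_comm, measureReal_def]
    have hPC : ∫ z, P z ≤ C := by
      have hsplit : ∫ z, Q z = (∫ z, Dv z) + ∫ z, P z := integral_add hDvint hPint
      rw [hsplit, hIBP, zero_add] at hQC
      exact hQC
    have hlow : ∀ z, (E n).indicator (fun w => -(lap h w)) z ≤ P z := by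
      intro z
      by_cases hz : z ∈ E n
      · rw [indicator_of_mem hz]
        have hzB : z ∈ B := hz.1
        have hzU : z ∈ U := hBU hzB
        have hθ1 : θ z = 1 := hθB z hzB
        have hχ1 : χh z = 1 := by
          show chi (h z / T) = 1
          apply chi_of_le
          rw [div_le_one hT0]
          exact hz.2.2
        rw [hPdef, indicator_of_mem hzU]
        simp [hφdef, hθ1, hχ1]
      · rw [indicator_of_notMem hz]
        by_cases hzU : z ∈ U
        · rw [hPdef, indicator_of_mem hzU]
          exact mul_nonneg (mul_nonneg (hθicc z).1 (hχ01 z).1)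
            (neg_nonneg.mpr (hsuper z hzU))
        · rw [hPdef, indicator_of_notMem hzU]
    have hEmeas := (hEcomp n).measurableSet
    have hEV : E n ⊆ V := fun z hz => hUV (subset_closure (hBU hz.1))
    have hlapEn : IntegrableOn (fun z => -(lap h z)) (E n) :=
      ContinuousOn.integrableOn_compact (hEcomp n) ((hlapV.mono hEV).neg)
    calc ∫ z in E n, -(lap h z)
        = ∫ z, (E n).indicator (fun w => -(lap h w)) z := (integral_indicator hEmeas).symm
      _ ≤ ∫ z, P z := integral_mono (hlapEn.integrable_indicator hEmeas) hPint hlow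
      _ ≤ C := hPC
  -- final assembly
  have hmeas : Measurable (lap h) := lap_measurable h
  have hIntK₂ : IntegrableOn (fun z => lap h z) K₂ :=
    ContinuousOn.integrableOn_compact hK₂c
      (hlapV.mono ((inter_subset_right).trans hUV))
  have hEmono : Monotone E := by
    intro m k hmk z hz
    refine ⟨hz.1, hz.2.1, hz.2.2.trans ?_⟩
    have : (m:ℝ) ≤ (k:ℝ) := Nat.cast_le.mpr hmk
    linarith
  have hEunion : (⋃ n, E n) = B := by
    apply subset_antisymm
    · exact iUnion_subset fun n => inter_subset_left
    · intro z hz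
      obtain ⟨n, hn⟩ := exists_nat_ge (h z)
      exact mem_iUnion.mpr ⟨n, hz, subset_closure (hBU hz), by linarith⟩
  set ν : Measure ℂ := volume.withDensity (fun z => ENNReal.ofReal (-(lap h z))) with hν
  have hdens : Measurable fun z => ENNReal.ofReal (-(lap h z)) := hmeas.neg.ennreal_ofReal
  have hνEn : ∀ n, ν (E n) ≤ ENNReal.ofReal C := by
    intro n
    rw [hν, withDensity_apply _ (hEcomp n).measurableSet]
    have hEV : E n ⊆ V := fun z hz => hUV (subset_closure (hBU hz.1))
    have hInt : IntegrableOn (fun z => -(lap h z)) (E n) :=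
      ContinuousOn.integrableOn_compact (hEcomp n) ((hlapV.mono hEV).neg)
    have hnn : 0 ≤ᵐ[volume.restrict (E n)] fun z => -(lap h z) :=
      (ae_restrict_iff' (hEcomp n).measurableSet).mpr
        (Filter.Eventually.of_forall fun z hz => neg_nonneg.mpr (hsuper z (hBU hz.1)))
    rw [← ofReal_integral_eq_lintegral_ofReal hInt hnn]
    exact ENNReal.ofReal_le_ofReal (bnd n)
  have hνB : ν B ≤ ENNReal.ofReal C := by
    have h1 : ν B = ⨆ n, ν (E n) := by
      rw [← hEunion]
      exact hEmono.measure_iUnion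
    rw [h1]
    exact iSup_le hνEn
  have hIntB : IntegrableOn (fun z => lap h z) B := by
    refine ⟨hmeas.aestronglyMeasurable.restrict, ?_⟩
    show (∫⁻ z, ‖lap h z‖ₑ ∂(volume.restrict B)) < ⊤
    have hcongr : (∫⁻ z, ‖lap h z‖ₑ ∂(volume.restrict B))
        = ∫⁻ z in B, ENNReal.ofReal (-(lap h z)) ∂volume := by
      apply setLIntegral_congr_fun_ae hBc.measurableSet
      apply Filter.Eventually.of_forall
      intro z hz
      rw [← ofReal_norm, Real.norm_eq_abs, abs_of_nonpos (hsuper z (hBU hz))]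
    rw [hcongr, ← withDensity_apply _ hBc.measurableSet, ← hν]
    exact lt_of_le_of_lt hνB ENNReal.ofReal_lt_top
  exact (hIntB.union hIntK₂).mono_set hUBK₂
end

section
/- Let λ ≥ 1, a ≥ 0 and c > π/2 − 1/λ, and let f(t) = −t·arctan(t) + ½·log(t² + 1). Then for every K ∈ ℝ there exists R₀ > 1 such that for every r ≥ R₀ and every t ∈ ℝ with log r − a ≤ t ≤ λ·log r + a, one has log r + c·t + f(t) ≥ K. (That is, the function h_c = log r + c·x₃ + f(x₃) tends to +∞ along every divergent sequence of points in a region lying between a catenoid end of logarithmic growth 1 below and a catenoid end of logarithmic growth λ above.) -/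
/-- In a region between catenoid ends of logarithmic growths `1` and `λ ≥ 1`
(so `log r − a ≤ t ≤ λ log r + a`), for `c > π/2 − 1/λ` the function
`h_c = log r + c t + f(t)`, with `f(t) = −t arctan t + ½ log(t² + 1)`,
tends to `+∞` as `r → ∞` (Lemma 3.5 of the paper). -/
theorem h_c_tendsto_top
    (lam a c : ℝ) (hlam : 1 ≤ lam) (ha : 0 ≤ a)
    (hc : c > Real.pi / 2 - 1 / lam)
    (f : ℝ → ℝ)
    (hf : ∀ t, f t = -t * Real.arctan t + (1 / 2) * Real.log (t ^ 2 + 1)) :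
    ∀ K : ℝ, ∃ R₀ : ℝ, R₀ > 1 ∧ ∀ r : ℝ, r ≥ R₀ → ∀ t : ℝ,
      Real.log r - a ≤ t → t ≤ lam * Real.log r + a →
      Real.log r + c * t + f t ≥ K := by
  intro K
  have hpi : (3:ℝ) < Real.pi := Real.pi_gt_three
  have hlam0 : (0:ℝ) < lam := by linarith
  have hinv : 1 / lam ≤ 1 := by
    rw [div_le_one hlam0]; exact hlam
  have hc0 : 0 < c := by nlinarith
  have hcpos : 0 < c + Real.pi / 2 := by nlinarith
  have hl1 : lam * (1 / lam) = 1 := by field_simp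
  have hδ : 0 < 1 + lam * (c - Real.pi / 2) := by nlinarith
  have h1cpos : (0:ℝ) < 1 + c + Real.pi / 2 := by nlinarith
  -- key bound on f
  have hfb : ∀ t : ℝ, f t ≥ -(Real.pi / 2) * |t| := by
    intro t
    rw [hf]
    have h1 : (0:ℝ) ≤ Real.log (t ^ 2 + 1) := Real.log_nonneg (by nlinarith)
    have h2 : |Real.arctan t| ≤ Real.pi / 2 := by
      rw [abs_le]
      constructor
      · linarith [Real.neg_pi_div_two_lt_arctan t]
      · linarith [Real.arctan_lt_pi_div_two t]
    have h3 : t * Real.arctan t ≤ Real.pi / 2 * |t| := by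
      calc t * Real.arctan t ≤ |t * Real.arctan t| := le_abs_self _
        _ = |t| * |Real.arctan t| := abs_mul _ _
        _ ≤ |t| * (Real.pi / 2) := mul_le_mul_of_nonneg_left h2 (abs_nonneg t)
        _ = Real.pi / 2 * |t| := by ring
    nlinarith
  obtain ⟨L, hL1, hqa, hLb, hqc⟩ :
      ∃ L : ℝ, 1 ≤ L ∧
        K + (c + Real.pi / 2) * a ≤ L * (1 + c + Real.pi / 2) ∧
        K ≤ L ∧
        K - (c - Real.pi / 2) * a ≤ L * (1 + lam * (c - Real.pi / 2)) := by
    refine ⟨max (max 1 ((K + (c + Real.pi / 2) * a) / (1 + c + Real.pi / 2)))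
        (max K ((K - (c - Real.pi / 2) * a) / (1 + lam * (c - Real.pi / 2)))),
        le_trans (le_max_left _ _) (le_max_left _ _), ?_,
        le_trans (le_max_left _ _) (le_max_right _ _), ?_⟩
    · exact (div_le_iff₀ h1cpos).mp (le_trans (le_max_right _ _) (le_max_left _ _))
    · exact (div_le_iff₀ hδ).mp (le_trans (le_max_right _ _) (le_max_right _ _))
  refine ⟨Real.exp L, ?_, ?_⟩
  · have := Real.add_one_le_exp L
    linarith
  intro r hr t ht1 ht2
  have hr0 : (0:ℝ) < r := lt_of_lt_of_le (Real.exp_pos L) hr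
  have hlog : L ≤ Real.log r := (Real.le_log_iff_exp_le hr0).mpr hr
  have hft := hfb t
  by_cases h0 : 0 ≤ t
  · rw [abs_of_nonneg h0] at hft
    by_cases hcl : Real.pi / 2 ≤ c
    · nlinarith [mul_nonneg (by linarith : (0:ℝ) ≤ c - Real.pi / 2) h0]
    · push_neg at hcl
      have h1 : 0 ≤ (Real.pi / 2 - c) * (lam * Real.log r + a - t) :=
        mul_nonneg (by linarith) (by linarith)
      have h2 : 0 ≤ (1 + lam * (c - Real.pi / 2)) * (Real.log r - L) :=
        mul_nonneg (le_of_lt hδ) (by linarith)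
      nlinarith [h1, h2, hqc]
  · push_neg at h0
    rw [abs_of_neg h0] at hft
    have h1 : 0 ≤ (c + Real.pi / 2) * (t - (Real.log r - a)) :=
      mul_nonneg (le_of_lt hcpos) (by linarith)
    have h2 : 0 ≤ (c + Real.pi / 2) * (Real.log r - L) :=
      mul_nonneg (le_of_lt hcpos) (by linarith)
    nlinarith [h1, h2, hqa]
end

section
/- Let λ ≥ 1, a ≥ 0 and c < π/2 − 1, and let f(t) = −t·arctan(t) + ½·log(t² + 1). Then for every K ∈ ℝ there exists R₀ > 1 such that for every r ≥ R₀ and every t ∈ ℝ with log r − a ≤ t ≤ λ·log r + a, one has log r + c·t + f(t) ≤ −K. (That is, the function h_c = log r + c·x₃ + f(x₃) tends to −∞ along every divergent sequence of points in a region lying between a catenoid end of logarithmic growth 1 below and a catenoid end of logarithmic growth λ above.) -/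
/-- In a region between catenoid ends of logarithmic growths `1` and `λ ≥ 1`
(so `log r − a ≤ t ≤ λ log r + a`), for `c < π/2 − 1` the function
`h_c = log r + c t + f(t)`, with `f(t) = −t arctan t + ½ log(t² + 1)`,
tends to `−∞` as `r → ∞` (Lemma 3.5 of the paper). -/
theorem h_c_tendsto_bot
    (lam a c : ℝ) (hlam : 1 ≤ lam) (ha : 0 ≤ a)
    (hc : c < Real.pi / 2 - 1)
    (f : ℝ → ℝ)
    (hf : ∀ t, f t = -t * Real.arctan t + (1 / 2) * Real.log (t ^ 2 + 1)) :
    ∀ K : ℝ, ∃ R₀ : ℝ, R₀ > 1 ∧ ∀ r : ℝ, r ≥ R₀ → ∀ t : ℝ,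
      Real.log r - a ≤ t → t ≤ lam * Real.log r + a →
      Real.log r + c * t + f t ≤ -K := by
  intro K
  obtain ⟨ε, hεdef⟩ : ∃ ε : ℝ, ε = (Real.pi / 2 - 1 - c) / 2 := ⟨_, rfl⟩
  have hε : 0 < ε := by rw [hεdef]; linarith
  obtain ⟨β, hβdef⟩ : ∃ β : ℝ, β = 1 + c + ε := ⟨_, rfl⟩
  have hβlt : β < Real.pi / 2 := by rw [hβdef, hεdef]; linarith
  obtain ⟨β₀, hβ₀def⟩ : ∃ β₀ : ℝ, β₀ = max β 0 := ⟨_, rfl⟩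
  have hβ₀lt : β₀ < Real.pi / 2 := hβ₀def ▸ max_lt hβlt (by positivity)
  have hβ₀gt : -(Real.pi / 2) < β₀ := by
    have : (0:ℝ) ≤ β₀ := hβ₀def ▸ le_max_right _ _
    have := Real.pi_pos
    linarith
  obtain ⟨T, hTdef⟩ : ∃ T : ℝ, T = Real.tan β₀ := ⟨_, rfl⟩
  have hT : Real.arctan T = β₀ := hTdef ▸ Real.arctan_tan hβ₀gt hβ₀lt
  obtain ⟨T₀, hT₀def⟩ : ∃ T₀ : ℝ, T₀ = max (max T 1) (max (36 / ε ^ 2) (2 * (a + K) / ε)) := ⟨_, rfl⟩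
  refine ⟨max (Real.exp (T₀ + a)) 2, lt_of_lt_of_le one_lt_two (le_max_right _ _), ?_⟩
  intro r hr t ht1 _
  have hr0 : (0:ℝ) < r := lt_of_lt_of_le two_pos (le_trans (le_max_right _ _) hr)
  have hlogr : T₀ + a ≤ Real.log r :=
    (Real.le_log_iff_exp_le hr0).2 (le_trans (le_max_left _ _) hr)
  have htT₀ : T₀ ≤ t := by linarith
  rw [hT₀def] at htT₀
  have ht_T : T ≤ t := le_trans (le_trans (le_max_left _ _) (le_max_left _ _)) htT₀
  have ht1' : (1:ℝ) ≤ t := le_trans (le_trans (le_max_right _ _) (le_max_left _ _)) htT₀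
  have ht36 : 36 / ε ^ 2 ≤ t :=
    le_trans (le_trans (le_max_left _ _) (le_max_right _ _)) htT₀
  have htaK : 2 * (a + K) / ε ≤ t :=
    le_trans (le_trans (le_max_right _ _) (le_max_right _ _)) htT₀
  have ht0 : (0:ℝ) ≤ t := le_trans zero_le_one ht1'
  -- arctan bound
  have harctan : β ≤ Real.arctan t := by
    calc β ≤ β₀ := hβ₀def ▸ le_max_left _ _
      _ = Real.arctan T := hT.symm
      _ ≤ Real.arctan t := Real.arctan_strictMono.monotone ht_T
  -- log bound: log (t^2+1) ≤ ε * t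
  have hs : Real.sqrt t ^ 2 = t := Real.sq_sqrt ht0
  have hs0 : 0 ≤ Real.sqrt t := Real.sqrt_nonneg t
  have hεs : 6 ≤ ε * Real.sqrt t := by
    have h36 : 36 ≤ ε ^ 2 * t := by
      have := (div_le_iff₀ (show (0:ℝ) < ε ^ 2 by positivity)).1 ht36
      linarith
    nlinarith [sq_nonneg (ε * Real.sqrt t - 6), hs, mul_nonneg hε.le hs0]
  have hsqrt1 : Real.sqrt (t + 1) ≤ (3 / 2) * Real.sqrt t := by
    have h1 : t + 1 ≤ ((3 / 2) * Real.sqrt t) ^ 2 := by nlinarith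
    calc Real.sqrt (t + 1) ≤ Real.sqrt (((3 / 2) * Real.sqrt t) ^ 2) := Real.sqrt_le_sqrt h1
      _ = (3 / 2) * Real.sqrt t := Real.sqrt_sq (by positivity)
  have hlog1 : Real.log (t + 1) ≤ 2 * Real.sqrt (t + 1) := by
    have h1 : Real.log (t + 1) = 2 * Real.log (Real.sqrt (t + 1)) := by
      rw [Real.log_sqrt (by linarith : (0:ℝ) ≤ t + 1)]; ring
    have h2 : Real.log (Real.sqrt (t + 1)) ≤ Real.sqrt (t + 1) - 1 :=
      Real.log_le_sub_one_of_pos (Real.sqrt_pos.2 (by linarith))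
    linarith
  have hlog2 : Real.log (t ^ 2 + 1) ≤ ε * t := by
    have h1 : Real.log (t ^ 2 + 1) ≤ Real.log ((t + 1) ^ 2) := by
      apply Real.log_le_log (by positivity)
      nlinarith
    have h2 : Real.log ((t + 1) ^ 2) = 2 * Real.log (t + 1) := by
      rw [Real.log_pow]; norm_num
    have h3 : ε * t = ε * Real.sqrt t * Real.sqrt t := by rw [mul_assoc, ← sq, hs]
    have h4 : 6 * Real.sqrt t ≤ ε * t := by
      rw [h3]; exact mul_le_mul_of_nonneg_right hεs hs0
    linarith [hlog1, hsqrt1, h1, h2, h4]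
  -- final estimate
  have hεt : 2 * (a + K) ≤ ε * t := by
    have := (div_le_iff₀ hε).1 htaK
    linarith
  have hhf := hf t
  have harct : -t * Real.arctan t ≤ -t * β := by
    have := mul_le_mul_of_nonneg_left harctan ht0
    linarith
  have hlr : Real.log r ≤ t + a := by linarith
  calc Real.log r + c * t + f t
      ≤ (t + a) + c * t + (-t * β + (1 / 2) * (ε * t)) := by
        rw [hhf]
        have : (1 / 2 : ℝ) * Real.log (t ^ 2 + 1) ≤ (1 / 2) * (ε * t) := by linarith
        linarith
    _ = a - (ε / 2) * t := by rw [hβdef]; ring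
    _ ≤ -K := by linarith
end

section
/- Let r ≥ 1 and let t ∈ ℝ satisfy |t| ≤ ½·log r. Then log r − t·arctan(t) + ½·log(t² + 1) ≥ (1/10)·log r. (That is, on a region where |x₃| ≤ ½·log r, the function h = log r + f(x₃) is bounded below by (1/10)·log r, hence is a nonnegative proper function whenever log r is proper.) -/
/-- On a region with `|x₃| ≤ ½ log r`, the function `h = log r + f(x₃)`, with
`f(t) = −t arctan t + ½ log(t² + 1)`, is bounded below by `(1/10) log r`
(from the proof of Lemma 2.1 of the paper). -/
theorem h_ge_tenth_log_r
    (r t : ℝ) (hr : 1 ≤ r) (ht : |t| ≤ (1 / 2) * Real.log r) :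
    Real.log r - t * Real.arctan t + (1 / 2) * Real.log (t ^ 2 + 1) ≥
      (1 / 10) * Real.log r := by
  have hL : 0 ≤ Real.log r := Real.log_nonneg hr
  have h1 : t * Real.arctan t ≤ |t| * (Real.pi / 2) := by
    calc t * Real.arctan t ≤ |t * Real.arctan t| := le_abs_self _
    _ = |t| * |Real.arctan t| := abs_mul _ _
    _ ≤ |t| * (Real.pi / 2) :=
        mul_le_mul_of_nonneg_left (abs_lt.2 ⟨Real.neg_pi_div_two_lt_arctan t, Real.arctan_lt_pi_div_two t⟩).le (abs_nonneg t)
  have h2 : |t| * (Real.pi / 2) ≤ (1 / 2) * Real.log r * (Real.pi / 2) :=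
    mul_le_mul_of_nonneg_right ht (by positivity)
  have h3 : 0 ≤ (1 / 2) * Real.log (t ^ 2 + 1) := by
    have : 0 ≤ Real.log (t ^ 2 + 1) := Real.log_nonneg (by nlinarith)
    linarith
  have hpi : Real.pi ≤ 3.15 := by linarith [Real.pi_lt_d2]
  nlinarith [h1, h2, h3, hL]
end
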